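/- arXiv:2005.01551 — 5 statements merged into one kernel-verified Lean document; each statement's English description precedes it below -/
import Mathlib

section
/- Flatness improvement lemma: For every μ > 0 and K > 0 there exists a constant κ_μ = κ(μ, n, K) > 0 with the following property: if ψ ∈ C(B₁) satisfies 0 ≤ ψ ≤ K in the unit ball B₁ ⊂ ℝⁿ, 0 < κ ≤ κ_μ, and v ∈ C(B₁) satisfies v(0) = 0, 0 ≤ v ≤ 1 in B₁, and v is a viscosity solution of Δ∞v = κ⁴ψ in B₁, then sup_{B_{1/2}} v ≤ μ. -/
open Set Metric Filter MeasureTheory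

/-- The infinity Laplacian of a (C²) function `φ` at `x`:
`Δ∞φ(x) = Σ_{i,j} ∂_iφ(x) ∂_jφ(x) ∂_{ij}φ(x)`. -/
noncomputable def infLap {n : ℕ} (φ : EuclideanSpace ℝ (Fin n) → ℝ)
    (x : EuclideanSpace ℝ (Fin n)) : ℝ :=
  ∑ i : Fin n, ∑ j : Fin n,
    fderiv ℝ φ x (EuclideanSpace.single i 1) * fderiv ℝ φ x (EuclideanSpace.single j 1) *
      fderiv ℝ (fun y => fderiv ℝ φ y (EuclideanSpace.single i 1)) x (EuclideanSpace.single j 1)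

/-- `u` is a viscosity supersolution of `Δ∞u = F(x, u(x))` in `Ω`. -/
def IsViscSupersol {n : ℕ} (Ω : Set (EuclideanSpace ℝ (Fin n)))
    (u : EuclideanSpace ℝ (Fin n) → ℝ)
    (F : EuclideanSpace ℝ (Fin n) → ℝ → ℝ) : Prop :=
  ∀ φ : EuclideanSpace ℝ (Fin n) → ℝ, ContDiff ℝ 2 φ →
    ∀ x₀ ∈ Ω, φ x₀ = u x₀ → IsLocalMin (fun x => u x - φ x) x₀ →
      infLap φ x₀ ≤ F x₀ (φ x₀)

/-- `u` is a viscosity subsolution of `Δ∞u = F(x, u(x))` in `Ω`. -/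
def IsViscSubsol {n : ℕ} (Ω : Set (EuclideanSpace ℝ (Fin n)))
    (u : EuclideanSpace ℝ (Fin n) → ℝ)
    (F : EuclideanSpace ℝ (Fin n) → ℝ → ℝ) : Prop :=
  ∀ φ : EuclideanSpace ℝ (Fin n) → ℝ, ContDiff ℝ 2 φ →
    ∀ x₀ ∈ Ω, φ x₀ = u x₀ → IsLocalMax (fun x => u x - φ x) x₀ →
      F x₀ (φ x₀) ≤ infLap φ x₀

/-- `u` is a viscosity solution of `Δ∞u = F(x, u(x))` in `Ω`. -/
def IsViscSol {n : ℕ} (Ω : Set (EuclideanSpace ℝ (Fin n)))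
    (u : EuclideanSpace ℝ (Fin n) → ℝ)
    (F : EuclideanSpace ℝ (Fin n) → ℝ → ℝ) : Prop :=
  IsViscSupersol Ω u F ∧ IsViscSubsol Ω u F

namespace Flat
variable {n : ℕ}

noncomputable def Q (y x : EuclideanSpace ℝ (Fin n)) : ℝ := ∑ i, (x i - y i)^2

lemma Q_nonneg (y x : EuclideanSpace ℝ (Fin n)) : 0 ≤ Q y x :=
  Finset.sum_nonneg fun _ _ => sq_nonneg _

lemma Q_eq (y x : EuclideanSpace ℝ (Fin n)) : Q y x = ‖x - y‖^2 := by
  rw [EuclideanSpace.norm_eq]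
  rw [Real.sq_sqrt (Finset.sum_nonneg fun i _ => by positivity)]
  refine Finset.sum_congr rfl fun i _ => ?_
  rw [PiLp.sub_apply, Real.norm_eq_abs, sq_abs]

lemma sqrt_Q (y x : EuclideanSpace ℝ (Fin n)) : Real.sqrt (Q y x) = ‖x - y‖ := by
  rw [Q_eq, Real.sqrt_sq (norm_nonneg _)]

lemma Q_ne_zero_iff {y x : EuclideanSpace ℝ (Fin n)} : Q y x ≠ 0 ↔ x ≠ y := by
  rw [Q_eq]
  simp [pow_eq_zero_iff, sub_eq_zero]

lemma continuous_Q (y : EuclideanSpace ℝ (Fin n)) : Continuous (Q y) := by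
  unfold Q
  exact continuous_finset_sum _ fun i _ =>
    (((EuclideanSpace.proj i).continuous).sub continuous_const).pow 2

noncomputable def DQ (y x : EuclideanSpace ℝ (Fin n)) : EuclideanSpace ℝ (Fin n) →L[ℝ] ℝ :=
  ∑ i, (2 * (x i - y i)) • (EuclideanSpace.proj i : EuclideanSpace ℝ (Fin n) →L[ℝ] ℝ)

lemma hasFDerivAt_coord (x : EuclideanSpace ℝ (Fin n)) (i : Fin n) :
    HasFDerivAt (fun x : EuclideanSpace ℝ (Fin n) => x i)
      (EuclideanSpace.proj i : EuclideanSpace ℝ (Fin n) →L[ℝ] ℝ) x := by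
  simpa [PiLp.proj_apply] using (EuclideanSpace.proj (𝕜 := ℝ) i).hasFDerivAt (x := x)

lemma hasFDerivAt_Q (y x : EuclideanSpace ℝ (Fin n)) : HasFDerivAt (Q y) (DQ y x) x := by
  have h : ∀ i : Fin n, HasFDerivAt (fun x : EuclideanSpace ℝ (Fin n) => (x i - y i)^2)
      ((2 * (x i - y i)) • (EuclideanSpace.proj i : EuclideanSpace ℝ (Fin n) →L[ℝ] ℝ)) x := by
    intro i
    have hs : HasDerivAt (fun t : ℝ => (t - y i)^2) (2 * (x i - y i)) (x i) := by
      exact (((hasDerivAt_id (x i)).sub_const (y i)).pow 2).congr_deriv (by simp)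
    simpa [Function.comp_def] using hs.comp_hasFDerivAt x (hasFDerivAt_coord x i)
  exact HasFDerivAt.fun_sum (fun i (_ : i ∈ Finset.univ) => h i)

lemma DQ_apply (y x : EuclideanSpace ℝ (Fin n)) (j : Fin n) :
    DQ y x (EuclideanSpace.single j 1) = 2 * (x j - y j) := by
  simp [DQ, ContinuousLinearMap.sum_apply, PiLp.proj_apply,
    EuclideanSpace.single_apply]

noncomputable def F (A B R t : ℝ) : ℝ := A * (R - Real.sqrt t) + B * (t - R^2)
noncomputable def F1 (A B t : ℝ) : ℝ := B - A / (2 * Real.sqrt t)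
noncomputable def F2 (A t : ℝ) : ℝ := A / (4 * t * Real.sqrt t)

lemma hasDerivAt_F {A B R t : ℝ} (ht : t ≠ 0) : HasDerivAt (F A B R) (F1 A B t) t := by
  have h1 : HasDerivAt (fun t : ℝ => A * (R - Real.sqrt t)) (A * (0 - 1/(2 * Real.sqrt t))) t :=
    ((hasDerivAt_const t R).sub (Real.hasDerivAt_sqrt ht)).const_mul A
  have h2 : HasDerivAt (fun t : ℝ => B * (t - R^2)) B t := by
    simpa using ((hasDerivAt_id t).sub_const (R^2)).const_mul B
  refine (h1.add h2).congr_deriv ?_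
  unfold F1; ring

lemma hasDerivAt_F1 {A B t : ℝ} (ht : 0 < t) : HasDerivAt (F1 A B) (F2 A t) t := by
  have hst : Real.sqrt t ≠ 0 := ne_of_gt (Real.sqrt_pos.mpr ht)
  have hden : HasDerivAt (fun t : ℝ => 2 * Real.sqrt t) (2 * (1/(2 * Real.sqrt t))) t :=
    (Real.hasDerivAt_sqrt ht.ne').const_mul 2
  have h : HasDerivAt (fun t : ℝ => A / (2 * Real.sqrt t))
      ((0 * (2 * Real.sqrt t) - A * (2 * (1/(2 * Real.sqrt t)))) / (2 * Real.sqrt t)^2) t :=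
    (hasDerivAt_const t A).div hden (by positivity)
  have h2 := (hasDerivAt_const t B).sub h
  refine h2.congr_deriv ?_
  have h4 : (2 * Real.sqrt t)^2 = 4 * t := by
    rw [mul_pow, Real.sq_sqrt ht.le]; ring
  rw [h4]
  unfold F2
  field_simp
  nlinarith [Real.mul_self_sqrt ht.le, Real.sqrt_pos.mpr ht]

lemma hasFDerivAt_phi {A B R : ℝ} {y x : EuclideanSpace ℝ (Fin n)} (hx : Q y x ≠ 0) :
    HasFDerivAt (fun w => F A B R (Q y w)) ((F1 A B (Q y x)) • DQ y x) x :=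
  (hasDerivAt_F hx).comp_hasFDerivAt x (hasFDerivAt_Q y x)

lemma fderiv_phi {A B R : ℝ} {y x : EuclideanSpace ℝ (Fin n)} (hx : Q y x ≠ 0) (i : Fin n) :
    fderiv ℝ (fun w => F A B R (Q y w)) x (EuclideanSpace.single i 1)
      = F1 A B (Q y x) * (2 * (x i - y i)) := by
  rw [(hasFDerivAt_phi hx).fderiv]
  simp [DQ_apply]

lemma isOpen_U (y : EuclideanSpace ℝ (Fin n)) :
    IsOpen {x : EuclideanSpace ℝ (Fin n) | Q y x ≠ 0} :=
  isOpen_compl_singleton.preimage (continuous_Q y)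

lemma fderiv2_phi {A B R : ℝ} {y x : EuclideanSpace ℝ (Fin n)} (hx : Q y x ≠ 0) (i j : Fin n) :
    fderiv ℝ (fun z => fderiv ℝ (fun w => F A B R (Q y w)) z (EuclideanSpace.single i 1)) x
        (EuclideanSpace.single j 1)
      = F1 A B (Q y x) * (2 * (if j = i then (1:ℝ) else 0))
        + (2 * (x i - y i)) * (F2 A (Q y x) * (2 * (x j - y j))) := by
  have ht : 0 < Q y x := lt_of_le_of_ne (Q_nonneg y x) (Ne.symm hx)
  have hev : (fun z => fderiv ℝ (fun w => F A B R (Q y w)) z (EuclideanSpace.single i 1))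
      =ᶠ[nhds x] (fun z => F1 A B (Q y z) * (2 * (z i - y i))) := by
    filter_upwards [(isOpen_U y).mem_nhds hx] with z hz
    exact fderiv_phi hz i
  rw [hev.fderiv_eq]
  have hc : HasFDerivAt (fun z : EuclideanSpace ℝ (Fin n) => F1 A B (Q y z))
      ((F2 A (Q y x)) • DQ y x) x :=
    (hasDerivAt_F1 ht).comp_hasFDerivAt x (hasFDerivAt_Q y x)
  have hd : HasFDerivAt (fun z : EuclideanSpace ℝ (Fin n) => 2 * (z i - y i))
      ((2:ℝ) • (EuclideanSpace.proj i : EuclideanSpace ℝ (Fin n) →L[ℝ] ℝ)) x :=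
    ((hasFDerivAt_coord x i).sub_const (y i)).const_mul 2
  rw [(hc.fun_mul hd).fderiv]
  simp [DQ_apply, PiLp.proj_apply, EuclideanSpace.single_apply, eq_comm]


lemma infLap_phi {A B R : ℝ} {y x : EuclideanSpace ℝ (Fin n)} (hx : x ≠ y) :
    infLap (fun w => F A B R (Q y w)) x = 2 * B * (A - 2 * B * ‖x - y‖)^2 := by
  have hQ : Q y x ≠ 0 := Q_ne_zero_iff.mpr hx
  have ht : 0 < Q y x := lt_of_le_of_ne (Q_nonneg y x) (Ne.symm hQ)
  have hs0 : 0 < ‖x - y‖ := norm_sub_pos_iff.mpr hx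
  set P := F1 A B (Q y x) with hP
  set W := F2 A (Q y x) with hW
  unfold infLap
  have hsummand : ∀ i j : Fin n,
      (P * (2 * (x i - y i))) * (P * (2 * (x j - y j))) *
        (P * (2 * (if j = i then (1:ℝ) else 0)) + (2 * (x i - y i)) * (W * (2 * (x j - y j))))
      = (16 * P^2 * W * (x i - y i)^2) * (x j - y j)^2
        + (if j = i then 8 * P^3 * (x i - y i)^2 else 0) := by
    intro i j
    by_cases h : j = i
    · subst h; simp only [if_pos rfl, eq_self_iff_true, if_true]; ring
    · simp only [if_neg h]; ring
  calc (∑ i : Fin n, ∑ j : Fin n,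
        fderiv ℝ (fun w => F A B R (Q y w)) x (EuclideanSpace.single i 1) *
          fderiv ℝ (fun w => F A B R (Q y w)) x (EuclideanSpace.single j 1) *
          fderiv ℝ (fun z => fderiv ℝ (fun w => F A B R (Q y w)) z (EuclideanSpace.single i 1)) x
            (EuclideanSpace.single j 1))
      = ∑ i : Fin n, ∑ j : Fin n,
          ((16 * P^2 * W * (x i - y i)^2) * (x j - y j)^2
            + (if j = i then 8 * P^3 * (x i - y i)^2 else 0)) := by
        refine Finset.sum_congr rfl fun i _ => Finset.sum_congr rfl fun j _ => ?_
        rw [fderiv_phi hQ i, fderiv_phi hQ j, fderiv2_phi hQ i j, ← hP, ← hW, hsummand]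
    _ = ∑ i : Fin n, ((16 * P^2 * W * (x i - y i)^2) * Q y x + 8 * P^3 * (x i - y i)^2) := by
        refine Finset.sum_congr rfl fun i _ => ?_
        rw [Finset.sum_add_distrib, ← Finset.mul_sum, Finset.sum_ite_eq']
        simp [Q]
    _ = ∑ i : Fin n, (16 * P^2 * W * Q y x + 8 * P^3) * (x i - y i)^2 :=
        Finset.sum_congr rfl fun i _ => by ring
    _ = (16 * P^2 * W * Q y x + 8 * P^3) * Q y x := by
        rw [← Finset.mul_sum]; rfl
    _ = 2 * B * (A - 2 * B * ‖x - y‖)^2 := by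
        have hQs : Q y x = ‖x - y‖^2 := Q_eq y x
        have hsq : Real.sqrt (Q y x) = ‖x - y‖ := sqrt_Q y x
        rw [hP, hW, F1, F2, hsq, hQs]
        have hn0 : ‖x - y‖ ≠ 0 := hs0.ne'
        field_simp
        ring


lemma infLap_congr {f g : EuclideanSpace ℝ (Fin n) → ℝ} {x : EuclideanSpace ℝ (Fin n)}
    (h : f =ᶠ[nhds x] g) : infLap f x = infLap g x := by
  have h1 : fderiv ℝ f x = fderiv ℝ g x := h.fderiv_eq
  have h2 : ∀ i : Fin n, (fun z => fderiv ℝ f z (EuclideanSpace.single i 1))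
      =ᶠ[nhds x] (fun z => fderiv ℝ g z (EuclideanSpace.single i 1)) := by
    intro i
    filter_upwards [h.eventuallyEq_nhds] with z hz
    rw [hz.fderiv_eq]
  unfold infLap
  exact Finset.sum_congr rfl fun i _ => Finset.sum_congr rfl fun j _ => by
    rw [h1, (h2 i).fderiv_eq]

lemma infLap_add_const (f : EuclideanSpace ℝ (Fin n) → ℝ) (c : ℝ) (x : EuclideanSpace ℝ (Fin n)) :
    infLap (fun z => f z + c) x = infLap f x := by
  have h1 : ∀ z : EuclideanSpace ℝ (Fin n), fderiv ℝ (fun w => f w + c) z = fderiv ℝ f z :=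
    fun z => fderiv_add_const c
  unfold infLap
  simp only [h1]

lemma contDiff_cutoff {c : EuclideanSpace ℝ (Fin n)} (χ : ContDiffBump c)
    {U : Set (EuclideanSpace ℝ (Fin n))} (hU : IsOpen U)
    (hsupp : closedBall c χ.rOut ⊆ U) {f : EuclideanSpace ℝ (Fin n) → ℝ}
    (hf : ∀ x ∈ U, ContDiffAt ℝ 2 f x) : ContDiff ℝ 2 (fun x => χ x * f x) := by
  rw [contDiff_iff_contDiffAt]
  intro z
  by_cases hz : z ∈ U
  · exact (χ.contDiff (n := 2)).contDiffAt.mul (hf z hz)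
  · have hz' : z ∉ closedBall c χ.rOut := fun h => hz (hsupp h)
    have hev : (fun x => χ x * f x) =ᶠ[nhds z] (fun _ => (0:ℝ)) := by
      filter_upwards [isClosed_closedBall.isOpen_compl.mem_nhds hz'] with w hw
      have hw' : χ.rOut ≤ dist w c := by
        rw [mem_compl_iff, mem_closedBall, not_le] at hw
        exact hw.le
      simp [χ.zero_of_le_dist hw']
    exact (contDiffAt_const (c := (0:ℝ))).congr_of_eventuallyEq hev


lemma contDiff_Q (y : EuclideanSpace ℝ (Fin n)) : ContDiff ℝ 2 (Q y) := by
  unfold Q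
  refine ContDiff.sum fun i _ => ?_
  have h : ContDiff ℝ 2 (fun x : EuclideanSpace ℝ (Fin n) => x i) := by
    have := ContinuousLinearMap.contDiff (n := 2)
      (EuclideanSpace.proj i : EuclideanSpace ℝ (Fin n) →L[ℝ] ℝ)
    simpa [PiLp.proj_apply] using this
  exact (h.sub contDiff_const).pow 2

lemma contDiffAt_phi {A B R : ℝ} {y x : EuclideanSpace ℝ (Fin n)} (hx : Q y x ≠ 0) :
    ContDiffAt ℝ 2 (fun w => F A B R (Q y w)) x := by
  have hF : ContDiffAt ℝ 2 (F A B R) (Q y x) := by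
    have hsqrt := Real.contDiffAt_sqrt (n := 2) hx
    unfold F
    exact (contDiffAt_const.mul (contDiffAt_const.sub hsqrt)).add
      (contDiffAt_const.mul (contDiffAt_id.sub contDiffAt_const))
  exact hF.comp x (contDiff_Q y).contDiffAt

end Flat

namespace Flat

lemma core {n : ℕ} {K : ℝ} {ψ v : EuclideanSpace ℝ (Fin n) → ℝ}
    (hψ : ∀ x ∈ ball (0 : EuclideanSpace ℝ (Fin n)) 1, 0 ≤ ψ x ∧ ψ x ≤ K)
    {κ : ℝ} (hκ0 : 0 < κ)
    (hv : ContinuousOn v (ball (0 : EuclideanSpace ℝ (Fin n)) 1))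
    (hv01 : ∀ x ∈ ball (0 : EuclideanSpace ℝ (Fin n)) 1, 0 ≤ v x ∧ v x ≤ 1)
    (hsuper : IsViscSupersol (ball (0 : EuclideanSpace ℝ (Fin n)) 1) v (fun x _ => κ ^ 4 * ψ x))
    {B : ℝ} (hB : 0 < B) (hκB : κ ^ 4 * K ≤ B ^ 3 / 4)
    {y z : EuclideanSpace ℝ (Fin n)} (hy : ‖y‖ ≤ 1 / 2) (hz : ‖z - y‖ ≤ 1 / 8) :
    v y ≤ 2 * v z + 3 * B / 16 := by
  have hcb : closedBall y (1/4) ⊆ ball (0 : EuclideanSpace ℝ (Fin n)) 1 := by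
    intro w hw
    rw [mem_closedBall] at hw
    rw [mem_ball]
    have h0 : dist y 0 ≤ 1/2 := by simpa [dist_zero_right] using hy
    calc dist w 0 ≤ dist w y + dist y 0 := dist_triangle _ _ _
    _ ≤ 1/4 + 1/2 := add_le_add hw h0
    _ < 1 := by norm_num
  have hzy : z ∈ closedBall y (1/4) := by
    rw [mem_closedBall, dist_eq_norm]; linarith
  have hzball : z ∈ ball (0 : EuclideanSpace ℝ (Fin n)) 1 := hcb hzy
  by_cases hcase : v y ≤ 3*B/16
  · have := (hv01 z hzball).1; linarith
  push_neg at hcase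
  set A : ℝ := 4 * v y + B / 4 with hA
  have hA0 : B < A := by rw [hA]; linarith
  set φ : EuclideanSpace ℝ (Fin n) → ℝ := fun w => F A B (1/4) (Q y w) with hφ
  have hφy : φ y = v y := by
    have hq : Q y y = 0 := by simp [Q]
    rw [hφ]
    simp only [F, hq, Real.sqrt_zero, hA]
    ring
  have hφform : ∀ w, φ w = A * (1/4 - ‖w - y‖) + B * (‖w - y‖^2 - (1/4)^2) := by
    intro w
    rw [hφ]
    simp only [F]
    rw [sqrt_Q, Q_eq]
  have hφcont : Continuous φ := by
    rw [hφ]; unfold F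
    exact (continuous_const.mul (continuous_const.sub
        (Real.continuous_sqrt.comp (continuous_Q y)))).add
      (continuous_const.mul ((continuous_Q y).sub continuous_const))
  obtain ⟨xm, hxmem, hxmin⟩ := (isCompact_closedBall y (1/4)).exists_isMinOn
    ⟨y, mem_closedBall_self (by norm_num)⟩
    ((hv.mono hcb).sub hφcont.continuousOn)
  set m := v xm - φ xm with hm
  have hminle : ∀ w ∈ closedBall y (1/4), m ≤ v w - φ w := fun w hw => hxmin hw
  have hkey : 0 ≤ m := by
    by_contra hneg
    push_neg at hneg
    have hxm_ne : xm ≠ y := by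
      intro h
      rw [hm, h, hφy, sub_self] at hneg
      exact lt_irrefl 0 hneg
    have hxq : Q y xm ≠ 0 := Q_ne_zero_iff.mpr hxm_ne
    have hsm : 0 < ‖xm - y‖ := norm_sub_pos_iff.mpr hxm_ne
    have hxmle : ‖xm - y‖ ≤ 1/4 := by
      rw [← dist_eq_norm]; exact mem_closedBall.mp hxmem
    have hxmball : xm ∈ ball (0 : EuclideanSpace ℝ (Fin n)) 1 := hcb hxmem
    have hxmlt : ‖xm - y‖ < 1/4 := by
      rcases lt_or_eq_of_le hxmle with h | h
      · exact h
      · exfalso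
        have : φ xm = 0 := by rw [hφform xm, h]; ring
        rw [hm, this, sub_zero] at hneg
        exact absurd ((hv01 xm hxmball).1) (not_le.mpr hneg)
    set s := ‖xm - y‖ with hs
    set r2 : ℝ := min s (1/4 - s) with hr2
    have hr2s : r2 ≤ s := min_le_left _ _
    have hr2s' : r2 ≤ 1/4 - s := min_le_right _ _
    have hr20 : 0 < r2 := lt_min hsm (by linarith)
    set χ : ContDiffBump xm := ⟨r2/2, 3*r2/4, by linarith, by linarith⟩ with hχ
    have hUsub : closedBall xm χ.rOut ⊆ {x : EuclideanSpace ℝ (Fin n) | Q y x ≠ 0} := by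
      intro w hw
      rw [mem_closedBall] at hw
      have hd1 : dist xm y ≤ dist xm w + dist w y := dist_triangle _ _ _
      have hd2 : dist xm y = s := by rw [dist_eq_norm]
      have hd3 : dist xm w ≤ 3*r2/4 := by rw [dist_comm]; exact hw
      have hd4 : 0 < dist w y := by
        have : (3:ℝ)*r2/4 ≤ 3*s/4 := by linarith
        linarith
      exact Q_ne_zero_iff.mpr (by
        intro hcon
        rw [hcon] at hd4
        simp at hd4)
    set φt : EuclideanSpace ℝ (Fin n) → ℝ := fun w => χ w * (φ w + m) with hφt
    have hC2 : ContDiff ℝ 2 φt :=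
      contDiff_cutoff χ (isOpen_U y) hUsub
        (fun w hw => (contDiffAt_phi hw).add contDiffAt_const)
    have hχ1 : ∀ w ∈ closedBall xm χ.rIn, φt w = φ w + m := by
      intro w hw
      rw [hφt]
      simp only
      rw [χ.one_of_mem_closedBall hw, one_mul]
    have hφtxm : φt xm = v xm := by
      rw [hχ1 xm (mem_closedBall_self (by positivity)), hm]; ring
    have hball_in : ball xm χ.rIn ⊆ closedBall y (1/4) := by
      intro w hw
      rw [mem_ball] at hw
      rw [mem_closedBall]
      have hd1 : dist w y ≤ dist w xm + dist xm y := dist_triangle _ _ _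
      have hd2 : dist xm y = s := by rw [dist_eq_norm]
      have : dist w xm < r2/2 := hw
      have : r2/2 ≤ (1/4 - s)/2 := by linarith
      linarith
    have hlocmin : IsLocalMin (fun w => v w - φt w) xm := by
      filter_upwards [ball_mem_nhds xm (by positivity : (0:ℝ) < χ.rIn)] with w hw
      have hwcb : w ∈ closedBall y (1/4) := hball_in hw
      have h1 : φt w = φ w + m := hχ1 w (ball_subset_closedBall hw)
      have h2 := hminle w hwcb
      show v xm - φt xm ≤ v w - φt w
      rw [hφtxm, h1]
      have : v xm - v xm = 0 := sub_self _
      linarith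
    have hsup := hsuper φt hC2 xm hxmball hφtxm hlocmin
    have hinf : infLap φt xm = 2 * B * (A - 2*B*s)^2 := by
      have hev : φt =ᶠ[nhds xm] (fun w => φ w + m) := by
        filter_upwards [ball_mem_nhds xm (by positivity : (0:ℝ) < χ.rIn)] with w hw
        exact hχ1 w (ball_subset_closedBall hw)
      rw [infLap_congr hev, infLap_add_const, hφ, infLap_phi hxm_ne]
    have hψb := hψ xm hxmball
    have hk4 : (0:ℝ) < κ^4 := by positivity
    have hrhs : κ^4 * ψ xm ≤ κ^4 * K := mul_le_mul_of_nonneg_left hψb.2 hk4.le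
    have hBs : B * s ≤ B * (1/4) := mul_le_mul_of_nonneg_left hxmlt.le hB.le
    have hAs : A/2 ≤ A - 2*B*s := by linarith
    have hA2 : B/2 ≤ A/2 := by linarith
    have hT : B/2 ≤ A - 2*B*s := le_trans hA2 hAs
    have hT2 : (B/2)^2 ≤ (A - 2*B*s)^2 := by
      apply pow_le_pow_left₀ (by positivity) hT
    have h5 : 2*B*((B/2)^2) ≤ 2*B*((A - 2*B*s)^2) := by
      apply mul_le_mul_of_nonneg_left hT2 (by positivity)
    have h6 : 2*B*((B/2)^2) = B^3/2 := by ring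
    have hgl : B^3/2 ≤ 2 * B * (A - 2*B*s)^2 := by linarith
    rw [hφtxm, hinf] at hsup
    have hsup' : 2 * B * (A - 2*B*s)^2 ≤ κ^4 * ψ xm := hsup
    have hchain : B ^ 3 / 2 ≤ B ^ 3 / 4 :=
      le_trans hgl (le_trans hsup' (le_trans hrhs hκB))
    have hB3 : 0 < B ^ 3 := pow_pos hB 3
    linarith
  have hφz := hminle z hzy
  have hd : ‖z - y‖^2 - (1/4)^2 ≥ -(1/4)^2 := by nlinarith [sq_nonneg ‖z - y‖]
  have hAnn : (0:ℝ) < A := by linarith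
  have h1 : A * (1/4 - ‖z - y‖) ≥ A * (1/8) := by nlinarith
  have h2 : B * (‖z - y‖^2 - (1/4)^2) ≥ -(B/16) := by nlinarith
  have h3 : φ z ≥ A/8 - B/16 := by
    rw [hφform z]; nlinarith
  have : v z ≥ A/8 - B/16 := by linarith
  rw [hA] at this
  linarith

end Flat

/-- Flatness improvement lemma (Lemma 2.2). -/
theorem flatness_improvement {n : ℕ} (μ K : ℝ) (hμ : 0 < μ) (hK : 0 < K) :
    ∃ κμ > (0 : ℝ), ∀ ψ : EuclideanSpace ℝ (Fin n) → ℝ,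
      ContinuousOn ψ (ball (0 : EuclideanSpace ℝ (Fin n)) 1) →
      (∀ x ∈ ball (0 : EuclideanSpace ℝ (Fin n)) 1, 0 ≤ ψ x ∧ ψ x ≤ K) →
      ∀ κ : ℝ, 0 < κ → κ ≤ κμ →
      ∀ v : EuclideanSpace ℝ (Fin n) → ℝ,
        ContinuousOn v (ball (0 : EuclideanSpace ℝ (Fin n)) 1) →
        v 0 = 0 →
        (∀ x ∈ ball (0 : EuclideanSpace ℝ (Fin n)) 1, 0 ≤ v x ∧ v x ≤ 1) →
        IsViscSol (ball (0 : EuclideanSpace ℝ (Fin n)) 1) v (fun x _ => κ ^ 4 * ψ x) →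
        ∀ x ∈ ball (0 : EuclideanSpace ℝ (Fin n)) (1 / 2), v x ≤ μ := by
  set B : ℝ := μ / 3 with hBdef
  have hB : 0 < B := by positivity
  set a : ℝ := B ^ 3 / (4 * K) with ha
  have ha0 : 0 < a := by positivity
  refine ⟨Real.sqrt (Real.sqrt a), by positivity, ?_⟩
  intro ψ hψc hψb κ hκ0 hκle v hvc hv0 hv01 hsol x hx
  have hκ4 : κ ^ 4 * K ≤ B ^ 3 / 4 := by
    have h1 : κ ^ 2 ≤ Real.sqrt a := by
      have h := pow_le_pow_left₀ hκ0.le hκle 2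
      rwa [Real.sq_sqrt (Real.sqrt_nonneg a)] at h
    have h2 : κ ^ 4 ≤ a := by
      have h := pow_le_pow_left₀ (by positivity : (0:ℝ) ≤ κ ^ 2) h1 2
      rw [Real.sq_sqrt ha0.le] at h
      calc κ ^ 4 = (κ ^ 2) ^ 2 := by ring
      _ ≤ a := h
    calc κ ^ 4 * K ≤ a * K := mul_le_mul_of_nonneg_right h2 hK.le
    _ = B ^ 3 / 4 := by rw [ha]; field_simp
  have hsuper := hsol.1
  have hxn : ‖x‖ < 1/2 := by rwa [mem_ball, dist_zero_right] at hx
  have step : ∀ c c' : ℝ, 0 ≤ c' → c' ≤ c → c ≤ 1 → c - c' ≤ 1/4 →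
      v (c • x) ≤ 2 * v (c' • x) + 3 * B / 16 := by
    intro c c' h1 h2 h3 h4
    apply Flat.core hψb hκ0 hvc hv01 hsuper hB hκ4
    · rw [norm_smul, Real.norm_eq_abs, abs_of_nonneg (le_trans h1 h2)]
      have : c * ‖x‖ ≤ 1 * ‖x‖ := mul_le_mul_of_nonneg_right h3 (norm_nonneg x)
      linarith
    · have hss : c' • x - c • x = (c' - c) • x := by rw [sub_smul]
      rw [hss, norm_smul, Real.norm_eq_abs, abs_of_nonpos (by linarith)]
      have h5 : -(c' - c) ≤ 1/4 := by linarith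
      have h6 : -(c' - c) * ‖x‖ ≤ (1/4) * (1/2) := by
        apply mul_le_mul h5 hxn.le (norm_nonneg x) (by norm_num)
      linarith
  have h10 : v ((1/4 : ℝ) • x) ≤ 2 * v ((0 : ℝ) • x) + 3 * B / 16 :=
    step (1/4) 0 le_rfl (by norm_num) (by norm_num) (by norm_num)
  have h21 : v ((1/2 : ℝ) • x) ≤ 2 * v ((1/4 : ℝ) • x) + 3 * B / 16 :=
    step (1/2) (1/4) (by norm_num) (by norm_num) (by norm_num) (by norm_num)
  have h32 : v ((3/4 : ℝ) • x) ≤ 2 * v ((1/2 : ℝ) • x) + 3 * B / 16 :=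
    step (3/4) (1/2) (by norm_num) (by norm_num) (by norm_num) (by norm_num)
  have h43 : v ((1 : ℝ) • x) ≤ 2 * v ((3/4 : ℝ) • x) + 3 * B / 16 :=
    step 1 (3/4) (by norm_num) (by norm_num) le_rfl (by norm_num)
  rw [one_smul] at h43
  rw [zero_smul, hv0] at h10
  have hfin : v x ≤ 45 * B / 16 := by linarith
  have : 45 * B / 16 ≤ μ := by rw [hBdef]; linarith
  linarith
end

section
/- Sharp regularity across the free boundary: Let Ω ⊂ ℝⁿ be open, let f : [0,∞) → ℝ be continuous and satisfy condition (1.2) with constants M > 0 and γ ∈ [0,3), and let u ∈ C(Ω) be a bounded non-negative viscosity solution of Δ∞u = f(u) in Ω. Then for every x₀ ∈ ∂{u > 0} ∩ Ω there exist constants C > 0 and ρ > 0, with C depending only on n, γ, M, ‖u‖_∞ and dist(x₀, ∂Ω), such that u(x) ≤ C|x − x₀|^{4/(3−γ)} for all x ∈ B_ρ(x₀). -/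
open Set Metric Filter MeasureTheory Topology

set_option maxHeartbeats 1000000

/-- Condition (1.2): for every `T > 0` there is `δ₀ > 0` such that
`0 ≤ f(δt) ≤ M δ^γ f(t)` for all `0 < t ≤ T` and `0 < δ ≤ δ₀`. -/
def Cond12 (f : ℝ → ℝ) (M γ : ℝ) : Prop :=
  ∀ T > 0, ∃ δ₀ > 0, ∀ t : ℝ, 0 < t → t ≤ T → ∀ δ : ℝ, 0 < δ → δ ≤ δ₀ →
    0 ≤ f (δ * t) ∧ f (δ * t) ≤ M * δ ^ γ * f t

variable {n : ℕ}
local notation "E" => EuclideanSpace ℝ (Fin n)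

noncomputable def qf (y x : E) : ℝ := ∑ i, (x i - y i) * (x i - y i)

lemma qf_eq_dist (y x : E) : qf y x = dist x y ^ 2 := by
  rw [EuclideanSpace.dist_eq, Real.sq_sqrt (by positivity)]
  unfold qf
  congr 1
  ext i
  rw [Real.dist_eq, sq_abs]
  ring

lemma qf_pos {y x : E} (h : x ≠ y) : 0 < qf y x := by
  rw [qf_eq_dist]
  have : dist x y ≠ 0 := fun h0 => h (by rwa [dist_eq_zero] at h0)
  positivity

lemma sqrt_qf (y x : E) : Real.sqrt (qf y x) = dist x y := by
  rw [qf_eq_dist, Real.sqrt_sq dist_nonneg]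

lemma hasFDerivAt_coord (y : E) (x : E) (i : Fin n) :
    HasFDerivAt (fun v : E => v i - y i) (EuclideanSpace.proj (𝕜 := ℝ) i) x :=
  (EuclideanSpace.proj (𝕜 := ℝ) i).hasFDerivAt.sub_const (y i)

noncomputable def DQ (y x : E) : E →L[ℝ] ℝ :=
  ∑ i, ((x i - y i) • (EuclideanSpace.proj (𝕜 := ℝ) i)
      + (x i - y i) • (EuclideanSpace.proj (𝕜 := ℝ) i))

lemma hasFDerivAt_qf (y x : E) : HasFDerivAt (qf y) (DQ y x) x := by
  unfold qf DQ
  apply HasFDerivAt.fun_sum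
  intro i _
  exact (hasFDerivAt_coord y x i).mul (hasFDerivAt_coord y x i)

lemma proj_single (i j : Fin n) :
    EuclideanSpace.proj (𝕜 := ℝ) i (EuclideanSpace.single j (1:ℝ)) = if i = j then 1 else 0 := by
  rw [PiLp.proj_apply, EuclideanSpace.single_apply]

lemma DQ_apply (y x : E) (j : Fin n) :
    DQ y x (EuclideanSpace.single j 1) = 2 * (x j - y j) := by
  unfold DQ
  rw [ContinuousLinearMap.sum_apply]
  have : ∀ i : Fin n, ((x i - y i) • (EuclideanSpace.proj (𝕜 := ℝ) i)
      + (x i - y i) • (EuclideanSpace.proj (𝕜 := ℝ) i)) (EuclideanSpace.single j 1)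
      = if i = j then (x i - y i) + (x i - y i) else 0 := by
    intro i
    simp only [ContinuousLinearMap.add_apply, ContinuousLinearMap.coe_smul', Pi.smul_apply,
      proj_single, smul_eq_mul]
    split <;> ring
  rw [Finset.sum_congr rfl (fun i _ => this i),
    Finset.sum_ite_eq' Finset.univ j (fun i => (x i - y i) + (x i - y i))]
  simp; ring

noncomputable def g1 (b c t : ℝ) : ℝ := c - b / (2 * Real.sqrt t)
noncomputable def g2 (b t : ℝ) : ℝ := b / (4 * t * Real.sqrt t)

lemma hasDerivAt_g0 (A b c : ℝ) {t : ℝ} (ht : 0 < t) :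
    HasDerivAt (fun t => A - b * Real.sqrt t + c * t) (g1 b c t) t := by
  have h := ((hasDerivAt_const t A).sub ((Real.hasDerivAt_sqrt ht.ne').const_mul b)).add
    ((hasDerivAt_id t).const_mul c)
  refine h.congr_deriv ?_
  unfold g1
  ring

lemma hasDerivAt_g1 (b c : ℝ) {t : ℝ} (ht : 0 < t) :
    HasDerivAt (fun t => g1 b c t) (g2 b t) t := by
  have hs : Real.sqrt t ≠ 0 := (Real.sqrt_pos.2 ht).ne'
  have h2s : (2 : ℝ) * Real.sqrt t ≠ 0 := by positivity
  have hden : HasDerivAt (fun t => 2 * Real.sqrt t) (2 * (1 / (2 * Real.sqrt t))) t :=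
    (Real.hasDerivAt_sqrt ht.ne').const_mul 2
  have h := (hasDerivAt_const t c).sub ((hasDerivAt_const t b).div hden h2s)
  refine h.congr_deriv ?_
  unfold g2
  have hsq : Real.sqrt t ^ 2 = t := Real.sq_sqrt ht.le
  field_simp
  linear_combination (-4 * b) * hsq

lemma hasFDerivAt_psi (y : E) (A b c : ℝ) {x : E} (hx : x ≠ y) :
    HasFDerivAt (fun v => A - b * Real.sqrt (qf y v) + c * qf y v)
      ((g1 b c (qf y x)) • DQ y x) x :=
  (hasDerivAt_g0 A b c (qf_pos hx)).comp_hasFDerivAt x (hasFDerivAt_qf y x)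

lemma hasFDerivAt_G1 (y : E) (b c : ℝ) {x : E} (hx : x ≠ y) :
    HasFDerivAt (fun v => g1 b c (qf y v)) ((g2 b (qf y x)) • DQ y x) x :=
  (hasDerivAt_g1 b c (qf_pos hx)).comp_hasFDerivAt x (hasFDerivAt_qf y x)

lemma hasFDerivAt_Fj (y : E) (b c : ℝ) {z : E} (hz : z ≠ y) (j : Fin n) :
    HasFDerivAt (fun v => g1 b c (qf y v) * (2 * (v j - y j)))
      (g1 b c (qf y z) • ((2:ℝ) • (EuclideanSpace.proj (𝕜 := ℝ) j))
        + (2 * (z j - y j)) • ((g2 b (qf y z)) • DQ y z)) z :=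
  (hasFDerivAt_G1 y b c hz).mul ((hasFDerivAt_coord y z j).const_mul 2)

lemma fderiv_Fj_apply (y : E) (b c : ℝ) {z : E} (hz : z ≠ y) (j k : Fin n) :
    fderiv ℝ (fun v => g1 b c (qf y v) * (2 * (v j - y j))) z (EuclideanSpace.single k 1)
      = g1 b c (qf y z) * (2 * (if j = k then 1 else 0))
        + (2 * (z j - y j)) * (g2 b (qf y z) * (2 * (z k - y k))) := by
  rw [(hasFDerivAt_Fj y b c hz j).fderiv]
  simp only [ContinuousLinearMap.add_apply, ContinuousLinearMap.coe_smul', Pi.smul_apply,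
    proj_single, smul_eq_mul, DQ_apply]

lemma contDiff_qf (y : E) : ContDiff ℝ 2 (qf y) := by
  apply ContDiff.sum
  intro i _
  have hc : ContDiff ℝ 2 (fun v : E => v i - y i) :=
    (EuclideanSpace.proj (𝕜 := ℝ) i).contDiff.sub contDiff_const
  exact hc.mul hc

lemma sum_identity (w : Fin n → ℝ) (p q : ℝ) :
    ∑ i, ∑ j, (p * (2 * w i)) * (p * (2 * w j)) *
        (p * (2 * (if i = j then (1:ℝ) else 0)) + (2 * w i) * (q * (2 * w j)))
      = 8 * p ^ 3 * (∑ i, w i * w i) + 16 * p ^ 2 * q * (∑ i, w i * w i) ^ 2 := by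
  have h1 : ∀ i j : Fin n, (p * (2 * w i)) * (p * (2 * w j)) *
        (p * (2 * (if i = j then (1:ℝ) else 0)) + (2 * w i) * (q * (2 * w j)))
      = (if i = j then 8 * p ^ 3 * (w i * w j) else 0)
        + (16 * p ^ 2 * q) * ((w i * w i) * (w j * w j)) := by
    intro i j
    split <;> ring
  calc ∑ i, ∑ j, (p * (2 * w i)) * (p * (2 * w j)) *
        (p * (2 * (if i = j then (1:ℝ) else 0)) + (2 * w i) * (q * (2 * w j)))
      = ∑ i : Fin n, ((8 * p ^ 3 * (w i * w i))
          + (16 * p ^ 2 * q) * ((w i * w i) * ∑ j, w j * w j)) := by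
        refine Finset.sum_congr rfl fun i _ => ?_
        rw [Finset.sum_congr rfl fun j _ => h1 i j, Finset.sum_add_distrib,
          Finset.sum_ite_eq Finset.univ i (fun j => 8 * p ^ 3 * (w i * w j)), ← Finset.mul_sum,
          ← Finset.mul_sum]
        simp only [Finset.mem_univ, if_true]
    _ = _ := by
        rw [Finset.sum_add_distrib, ← Finset.mul_sum, ← Finset.mul_sum, ← Finset.sum_mul]
        ring_nf

lemma exists_testfun (y z : E) (hzy : z ≠ y) (A b c : ℝ) :
    ∃ φ : EuclideanSpace ℝ (Fin n) → ℝ, ContDiff ℝ 2 φ ∧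
      (∀ x ∈ ball z (dist z y / 4), φ x = A - b * dist x y + c * dist x y ^ 2) ∧
      infLap φ z = 2 * c * (b - 2 * c * dist z y) ^ 2 := by
  set s := dist z y with hs_def
  have hs : 0 < s := dist_pos.2 hzy
  set ψ : EuclideanSpace ℝ (Fin n) → ℝ :=
    fun v => A - b * Real.sqrt (qf y v) + c * qf y v with hψ_def
  set bump : ContDiffBump z := ⟨s/4, s/2, by positivity, by linarith⟩ with hbump_def
  set φ : EuclideanSpace ℝ (Fin n) → ℝ := fun v => bump v * ψ v with hφ_def
  have hψ_dist : ∀ v, ψ v = A - b * dist v y + c * dist v y ^ 2 := by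
    intro v
    show A - b * Real.sqrt (qf y v) + c * qf y v = _
    rw [sqrt_qf, qf_eq_dist]
  -- points in the small ball are away from y
  have hfar : ∀ v, v ∈ ball z (s/2) → v ≠ y := by
    intro v hv
    have h1 : dist v y > s / 2 := by
      have := dist_triangle z v y
      have h2 : dist v z < s / 2 := mem_ball.1 hv
      rw [dist_comm v z] at h2
      linarith [dist_triangle z v y]
    intro h; rw [h, dist_self] at h1; linarith
  have hφψ : ∀ v ∈ ball z (s/4), φ v = ψ v := by
    intro v hv
    have : bump v = 1 := bump.one_of_mem_closedBall (ball_subset_closedBall hv)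
    rw [hφ_def]; simp only [this, one_mul]
  -- smoothness
  have hφsmooth : ContDiff ℝ 2 φ := by
    rw [contDiff_iff_contDiffAt]
    intro x
    by_cases hxy : x = y
    · -- φ vanishes near y
      subst hxy
      have hev : φ =ᶠ[𝓝 x] fun _ => (0:ℝ) := by
        refine eventually_of_mem (ball_mem_nhds x (by positivity : (0:ℝ) < s/2)) ?_
        intro v hv
        have hvz : bump v = 0 := by
          apply bump.zero_of_le_dist
          have h2 : dist v x < s / 2 := mem_ball.1 hv
          have := dist_triangle x v z
      -- dist v z ≥ dist x z - dist x v
          have h3 : dist x z ≤ dist x v + dist v z := dist_triangle x v z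
          have h4 : dist x z = s := by rw [dist_comm]
          rw [dist_comm v x] at h2
          simp only [hbump_def]
          linarith
        simp [hφ_def, hvz]
      exact (contDiffAt_const (c := (0:ℝ))).congr_of_eventuallyEq hev
    · have hq : ContDiffAt ℝ 2 (qf y) x := (contDiff_qf y).contDiffAt
      have hsq : ContDiffAt ℝ 2 Real.sqrt (qf y x) := Real.contDiffAt_sqrt (qf_pos hxy).ne'
      have hψat : ContDiffAt ℝ 2 ψ x := by
        rw [hψ_def]
        exact (contDiffAt_const.sub (contDiffAt_const.mul (hsq.comp x hq))).add
          (contDiffAt_const.mul hq)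
      exact (bump.contDiff.contDiffAt).mul hψat
  -- first derivatives of φ near z
  have hfd1 : ∀ v ∈ ball z (s/4), ∀ j : Fin n,
      fderiv ℝ φ v (EuclideanSpace.single j 1)
        = g1 b c (qf y v) * (2 * (v j - y j)) := by
    intro v hv j
    have hev : φ =ᶠ[𝓝 v] ψ :=
      eventually_of_mem (isOpen_ball.mem_nhds hv) hφψ
    have hvy : v ≠ y := hfar v (ball_subset_ball (by linarith) hv)
    rw [hev.fderiv_eq, (hasFDerivAt_psi y A b c hvy).fderiv]
    simp only [ContinuousLinearMap.coe_smul', Pi.smul_apply, DQ_apply, smul_eq_mul]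
  have hzball : z ∈ ball z (s/4) := mem_ball_self (by positivity)
  -- second derivatives at z
  have hfd2 : ∀ i j : Fin n,
      fderiv ℝ (fun v => fderiv ℝ φ v (EuclideanSpace.single i 1)) z (EuclideanSpace.single j 1)
        = g1 b c (qf y z) * (2 * (if i = j then (1:ℝ) else 0))
          + (2 * (z i - y i)) * (g2 b (qf y z) * (2 * (z j - y j))) := by
    intro i j
    have hev : (fun v => fderiv ℝ φ v (EuclideanSpace.single i 1))
        =ᶠ[𝓝 z] (fun v => g1 b c (qf y v) * (2 * (v i - y i))) :=
      eventually_of_mem (isOpen_ball.mem_nhds hzball) (fun v hv => hfd1 v hv i)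
    rw [hev.fderiv_eq, fderiv_Fj_apply y b c hzy i j]
  refine ⟨φ, hφsmooth, fun x hx => by rw [hφψ x hx, hψ_dist x], ?_⟩
  -- compute infLap
  unfold infLap
  have : ∀ i j : Fin n,
      fderiv ℝ φ z (EuclideanSpace.single i 1) * fderiv ℝ φ z (EuclideanSpace.single j 1) *
        fderiv ℝ (fun v => fderiv ℝ φ v (EuclideanSpace.single i 1)) z (EuclideanSpace.single j 1)
      = (g1 b c (qf y z) * (2 * (z i - y i))) * (g1 b c (qf y z) * (2 * (z j - y j))) *
          (g1 b c (qf y z) * (2 * (if i = j then (1:ℝ) else 0))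
            + (2 * (z i - y i)) * (g2 b (qf y z) * (2 * (z j - y j)))) := by
    intro i j
    rw [hfd1 z hzball i, hfd1 z hzball j, hfd2 i j]
  rw [Finset.sum_congr rfl fun i _ => Finset.sum_congr rfl fun j _ => this i j]
  rw [sum_identity (fun i => z i - y i) (g1 b c (qf y z)) (g2 b (qf y z))]
  have hqz : (∑ i : Fin n, (z i - y i) * (z i - y i)) = s ^ 2 := by
    rw [show (∑ i : Fin n, (z i - y i) * (z i - y i)) = qf y z from rfl, qf_eq_dist]
  have hqz' : qf y z = s ^ 2 := qf_eq_dist y z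
  have hsqrt : Real.sqrt (qf y z) = s := sqrt_qf y z
  unfold g1 g2
  rw [hsqrt, hqz', hqz]
  have hs0 : s ≠ 0 := hs.ne'
  field_simp
  ring

lemma key_estimate (Ω : Set (EuclideanSpace ℝ (Fin n))) (hΩo : IsOpen Ω)
    (f : ℝ → ℝ) (u : EuclideanSpace ℝ (Fin n) → ℝ)
    (huc : ContinuousOn u Ω) (hu0 : ∀ x ∈ Ω, 0 ≤ u x)
    (hsup : IsViscSupersol Ω u (fun _ t => f t))
    (x₀ y : EuclideanSpace ℝ (Fin n)) (hd : 0 < dist y x₀)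
    (hballΩ : closedBall y (2 * dist y x₀) ⊆ Ω)
    (hx0 : u x₀ = 0) (τ G : ℝ) (hG0 : 0 ≤ G)
    (hτ : ∀ z ∈ closedBall y (2 * dist y x₀), u z ≤ τ)
    (hfG : ∀ t, 0 ≤ t → t ≤ τ → f t ≤ G) :
    u y ^ 3 ≤ 64 * G * dist y x₀ ^ 4 := by
  set d := dist y x₀ with hd_def
  have hyΩ : y ∈ Ω := hballΩ (mem_closedBall_self (by positivity))
  have hUnn : 0 ≤ u y := hu0 y hyΩ
  by_contra hcon
  push_neg at hcon
  set U := u y with hU_def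
  have hU3 : 0 < U ^ 3 := lt_of_le_of_lt (by positivity) hcon
  have hU0 : 0 < U := by nlinarith [sq_nonneg U]
  set R := 2 * d with hR_def
  set c := U / (8 * d ^ 2) with hc_def
  set b := 3 * U / (4 * d) with hb_def
  have hc0 : 0 < c := by rw [hc_def]; positivity
  have hb0 : 0 < b := by rw [hb_def]; positivity
  -- arithmetic facts
  have hψR : U - b * R + c * R ^ 2 = 0 := by
    rw [hb_def, hc_def, hR_def]; field_simp; ring
  have hcRb : c * R ≤ b := by
    rw [hb_def, hc_def, hR_def]
    rw [div_mul_eq_mul_div, div_le_div_iff₀ (by positivity) (by positivity)]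
    nlinarith
  have hbR : b - 2 * c * R = U / (4 * d) := by
    rw [hb_def, hc_def, hR_def]; field_simp; ring
  have h2c : 2 * c * (U / (4 * d)) ^ 2 = U ^ 3 / (64 * d ^ 4) := by
    rw [hc_def]; field_simp; ring
  set ψ : EuclideanSpace ℝ (Fin n) → ℝ :=
    fun v => U - b * dist v y + c * dist v y ^ 2 with hψ_def
  have main : ∀ x ∈ closedBall y R, ψ x ≤ u x := by
    intro x hx
    rcases eq_or_ne x y with rfl | hxy
    · have : ψ x = U := by
        show U - b * dist x x + c * dist x x ^ 2 = U
        rw [dist_self]; ring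
      rw [this]
    · refine le_of_forall_pos_le_add ?_
      intro ε hε
      have hcy : ContinuousAt u y := huc.continuousAt (hΩo.mem_nhds hyΩ)
      obtain ⟨δ, hδ0, hδ⟩ := Metric.continuousAt_iff.1 hcy ε hε
      set ρ := min (dist x y) (δ / 2) with hρ_def
      have hxy0 : 0 < dist x y := dist_pos.2 hxy
      have hρ0 : 0 < ρ := lt_min hxy0 (by linarith)
      have hρx : ρ ≤ dist x y := min_le_left _ _
      have hρδ : ρ < δ := lt_of_le_of_lt (min_le_right _ _) (by linarith)
      set An := closedBall y R ∩ (ball y ρ)ᶜ with hAn_def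
      have hAnΩ : An ⊆ Ω := fun v hv => hballΩ hv.1
      have hcomp : IsCompact An :=
        (isCompact_closedBall y R).inter_right isOpen_ball.isClosed_compl
      have hxAn : x ∈ An := ⟨hx, fun hc => absurd (mem_ball.1 hc) (not_lt.2 hρx)⟩
      have hψcont : ContinuousOn (fun v => u v - ψ v) An := by
        apply (huc.mono hAnΩ).sub
        apply Continuous.continuousOn
        have hdc : Continuous fun v : EuclideanSpace ℝ (Fin n) => dist v y :=
          Continuous.dist continuous_id continuous_const
        exact (continuous_const.sub (continuous_const.mul hdc)).add
          (continuous_const.mul (hdc.pow 2))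
      obtain ⟨z, hzAn, hzmin⟩ := hcomp.exists_isMinOn ⟨x, hxAn⟩ hψcont
      set m := u z - ψ z with hm_def
      have hminle : ∀ v ∈ An, m ≤ u v - ψ v := fun v hv => hzmin hv
      have hzR : dist z y ≤ R := mem_closedBall.1 hzAn.1
      have hzρ : ρ ≤ dist z y := by
        have := hzAn.2
        simp only [mem_compl_iff, mem_ball, not_lt] at this
        exact this
      have hzΩ : z ∈ Ω := hAnΩ hzAn
      have hzU : 0 ≤ u z := hu0 z hzΩ
      have hm : -ε ≤ m := by
        rcases eq_or_lt_of_le hzR with hR1 | hRlt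
        · have hψz : ψ z = 0 := by
            show U - b * dist z y + c * dist z y ^ 2 = 0
            rw [hR1]; exact hψR
          rw [hm_def, hψz]
          linarith
        · rcases eq_or_lt_of_le hzρ with hρz | hρz
          · have hzyδ : dist z y < δ := by rw [← hρz]; exact hρδ
            have h1 : dist (u z) (u y) < ε := hδ hzyδ
            have h2 : ψ z ≤ U := by
              show U - b * dist z y + c * dist z y ^ 2 ≤ U
              have ht0 : 0 ≤ dist z y := dist_nonneg
              nlinarith [mul_le_mul_of_nonneg_right hzR (mul_nonneg hc0.le ht0),
                mul_le_mul_of_nonneg_right hcRb ht0]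
            have h4 := abs_sub_lt_iff.1 (by rwa [Real.dist_eq] at h1)
            rw [hm_def]
            rw [← hU_def] at h4
            linarith [h4.2]
          · exfalso
            have hzy : z ≠ y := by
              intro h
              rw [h, dist_self] at hρz
              exact absurd hρz (not_lt.2 hρ0.le)
            obtain ⟨φ, hφsm, hφeq, hφinf⟩ := exists_testfun y z hzy (U + m) b c
            set s' := dist z y with hs'_def
            have hs'0 : 0 < s' := lt_trans hρ0 hρz
            set ε' := min (s' / 4) (min (s' - ρ) (R - s')) with hε'_def
            have hε'0 : 0 < ε' := by
              apply lt_min (by positivity)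
              exact lt_min (by linarith) (by linarith)
            have hball_sub : ∀ v ∈ ball z ε', v ∈ An ∧ v ∈ ball z (s' / 4) := by
              intro v hv
              have hvz : dist v z < ε' := mem_ball.1 hv
              have h1 : dist v z < s' / 4 := lt_of_lt_of_le hvz (min_le_left _ _)
              have h2 : dist v z < s' - ρ :=
                lt_of_lt_of_le hvz (le_trans (min_le_right _ _) (min_le_left _ _))
              have h3 : dist v z < R - s' :=
                lt_of_lt_of_le hvz (le_trans (min_le_right _ _) (min_le_right _ _))
              have htri1 : s' ≤ dist z v + dist v y := dist_triangle z v y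
              have htri2 : dist v y ≤ dist v z + s' := dist_triangle v z y
              rw [dist_comm z v] at htri1
              refine ⟨⟨mem_closedBall.2 (by linarith), ?_⟩, mem_ball.2 h1⟩
              intro hcball
              have := mem_ball.1 hcball
              linarith
            have hφψm : ∀ v ∈ ball z (s' / 4), φ v = ψ v + m := by
              intro v hv
              rw [hφeq v hv]
              show U + m - b * dist v y + c * dist v y ^ 2
                = (U - b * dist v y + c * dist v y ^ 2) + m
              ring
            have hzball : z ∈ ball z (s' / 4) := mem_ball_self (by positivity)
            have hφz : φ z = u z := by
              rw [hφψm z hzball, hm_def]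
              ring
            have hlocmin : IsLocalMin (fun v => u v - φ v) z := by
              have hev : ∀ᶠ v in 𝓝 z, (fun v => u v - φ v) z ≤ u v - φ v := by
                refine eventually_of_mem (ball_mem_nhds z hε'0) ?_
                intro v hv
                obtain ⟨hvAn, hvball⟩ := hball_sub v hv
                have h1 : m ≤ u v - ψ v := hminle v hvAn
                rw [hφψm v hvball]
                simp only [hφz]
                linarith
              exact hev
            have hsup' := hsup φ hφsm z hzΩ hφz hlocmin
            rw [hφinf, hφz] at hsup'
            have hfu : f (u z) ≤ G := hfG (u z) hzU (hτ z hzAn.1)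
            have hmono : U / (4 * d) ≤ b - 2 * c * s' := by
              rw [← hbR]
              nlinarith
            have hkey : U ^ 3 / (64 * d ^ 4) ≤ 2 * c * (b - 2 * c * s') ^ 2 := by
              rw [← h2c]
              apply mul_le_mul_of_nonneg_left ?_ (by positivity)
              apply pow_le_pow_left₀ (by positivity) hmono
            have hfinal : U ^ 3 / (64 * d ^ 4) ≤ G :=
              le_trans hkey (le_trans hsup' hfu)
            rw [div_le_iff₀ (by positivity)] at hfinal
            nlinarith
      have hxineq := hminle x hxAn
      rw [hm_def] at hxineq
      show U - b * dist x y + c * dist x y ^ 2 ≤ u x + ε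
      have hψx : ψ x = U - b * dist x y + c * dist x y ^ 2 := rfl
      linarith [hxineq, hm]
  have hx₀mem : x₀ ∈ closedBall y R := by
    rw [mem_closedBall, dist_comm]
    rw [hR_def, ← hd_def]
    linarith
  have hmain := main x₀ hx₀mem
  rw [hx0] at hmain
  have hdx : dist x₀ y = d := by rw [dist_comm, ← hd_def]
  have hψx₀ : ψ x₀ = U - b * d + c * d ^ 2 := by
    show U - b * dist x₀ y + c * dist x₀ y ^ 2 = _
    rw [hdx]
  rw [hψx₀] at hmain
  have hbd : b * d = 3 * U / 4 := by rw [hb_def]; field_simp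
  have hcd : c * d ^ 2 = U / 8 := by rw [hc_def]; field_simp
  nlinarith


lemma cond12_bound (f : ℝ → ℝ) (M γ : ℝ) (hM : 0 < M) (hγ0 : 0 ≤ γ)
    (hfc : ContinuousOn f (Ici 0)) (hf : Cond12 f M γ) (T : ℝ) (hT : 0 < T) :
    ∃ δ₀ > 0, ∃ K ≥ (0:ℝ), ∀ τ, 0 < τ → τ ≤ δ₀ * T →
      ∀ t, 0 ≤ t → t ≤ τ → f t ≤ K * τ ^ γ := by
  obtain ⟨δ₀, hδ₀, hC⟩ := hf T hT
  have hfT : 0 ≤ f T := by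
    obtain ⟨h1, h2⟩ := hC T hT le_rfl δ₀ hδ₀ le_rfl
    nlinarith [mul_pos hM (Real.rpow_pos_of_pos hδ₀ γ)]
  have hTγ : (0:ℝ) < T ^ γ := Real.rpow_pos_of_pos hT γ
  set K := M * f T / T ^ γ with hK_def
  have hK0 : 0 ≤ K := by positivity
  refine ⟨δ₀, hδ₀, K, hK0, ?_⟩
  have hpos : ∀ t, 0 < t → t ≤ δ₀ * T → f t ≤ K * t ^ γ := by
    intro t ht htδ
    have hδt : t / T ≤ δ₀ := (div_le_iff₀ hT).2 (by linarith)
    have hδtpos : 0 < t / T := div_pos ht hT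
    obtain ⟨h1, h2⟩ := hC T hT le_rfl (t / T) hδtpos hδt
    rw [div_mul_cancel₀ _ hT.ne'] at h2
    have heq : M * (t / T) ^ γ * f T = K * t ^ γ := by
      rw [Real.div_rpow ht.le hT.le, hK_def]
      field_simp
    linarith
  intro τ hτ hτδ t ht htτ
  have hτγ : 0 < τ ^ γ := Real.rpow_pos_of_pos hτ γ
  rcases eq_or_lt_of_le ht with h0 | h0
  · have hlim : Tendsto f (𝓝[>] (0:ℝ)) (𝓝 (f 0)) :=
      (hfc 0 self_mem_Ici).mono_left (nhdsWithin_mono 0 Ioi_subset_Ici_self)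
    have hev : ∀ᶠ s in 𝓝[>] (0:ℝ), f s ≤ K * τ ^ γ := by
      filter_upwards [Ioc_mem_nhdsGT (lt_min hτ (by positivity : (0:ℝ) < δ₀ * T))]
      intro s hs
      have hs1 : 0 < s := hs.1
      have hs2 : s ≤ τ := le_trans hs.2 (min_le_left _ _)
      have hs3 : s ≤ δ₀ * T := le_trans hs.2 (min_le_right _ _)
      have h1 := hpos s hs1 hs3
      have h2 : s ^ γ ≤ τ ^ γ := Real.rpow_le_rpow hs1.le hs2 hγ0
      nlinarith
    have := le_of_tendsto hlim hev
    rw [← h0]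
    exact this
  · have h1 := hpos t h0 (le_trans htτ hτδ)
    have h2 : t ^ γ ≤ τ ^ γ := Real.rpow_le_rpow ht htτ hγ0
    nlinarith

lemma geom_aux (θ : ℝ) (hθ0 : 0 ≤ θ) (hθ1 : θ < 1) (k : ℕ) :
    ((k : ℝ) + 1) * θ ^ k * (1 - θ) ≤ 1 := by
  have h1 : ((k : ℝ) + 1) * θ ^ k = ∑ _i ∈ Finset.range (k + 1), θ ^ k := by
    rw [Finset.sum_const, Finset.card_range]
    push_cast
    ring
  have h2 : (∑ _i ∈ Finset.range (k + 1), θ ^ k) ≤ ∑ i ∈ Finset.range (k + 1), θ ^ i := by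
    apply Finset.sum_le_sum
    intro i hi
    exact pow_le_pow_of_le_one hθ0 hθ1.le (Nat.lt_succ_iff.1 (Finset.mem_range.1 hi))
  have h3 : (∑ i ∈ Finset.range (k + 1), θ ^ i) * (1 - θ) = 1 - θ ^ (k + 1) := by
    have := geom_sum_mul θ (k + 1)
    linear_combination -this
  have h4 : (0:ℝ) ≤ θ ^ (k + 1) := pow_nonneg hθ0 _
  nlinarith [mul_le_mul_of_nonneg_right (le_trans (le_of_eq h1) h2) (by linarith : (0:ℝ) ≤ 1 - θ)]

lemma step_arith (uv dv τ₀ L K₁ θ α βk γ : ℝ)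
    (huv : 0 ≤ uv) (hdv : 0 < dv) (hτ₀ : 0 < τ₀) (hL1 : 1 ≤ L) (hK₁ : 0 < K₁)
    (hθ0 : 0 ≤ θ) (hθ1 : θ < 1) (hγ : γ = 3 * θ) (hβk : 0 ≤ βk) (hβkα : βk ≤ α)
    (hX : 4 * K₁ ^ ((1:ℝ)/3) * 3 ^ (θ * α) ≤ L ^ (1 - θ))
    (hkey : uv ^ 3 ≤ 64 * (K₁ * (min τ₀ (L * (3 * dv) ^ βk)) ^ γ) * dv ^ 4) :
    uv ≤ L * dv ^ (4/3 + θ * βk) := by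
  have hL0 : 0 < L := lt_of_lt_of_le zero_lt_one hL1
  set τd := min τ₀ (L * (3 * dv) ^ βk) with hτd_def
  have h3dv : (0:ℝ) < 3 * dv := by linarith
  have hτd0 : 0 < τd := lt_min hτ₀ (by positivity)
  have hτdle : τd ≤ L * (3 * dv) ^ βk := min_le_right _ _
  -- cube root
  have h1 : uv ≤ (64 * (K₁ * τd ^ γ) * dv ^ 4) ^ ((1:ℝ)/3) := by
    have huv3 : uv = ((uv ^ 3) ^ ((1:ℝ)/3) : ℝ) := by
      rw [← Real.rpow_natCast uv 3, ← Real.rpow_mul huv]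
      norm_num
    rw [huv3]
    exact Real.rpow_le_rpow (by positivity) hkey (by norm_num)
  have h2 : (64 * (K₁ * τd ^ γ) * dv ^ 4) ^ ((1:ℝ)/3)
      = 4 * K₁ ^ ((1:ℝ)/3) * τd ^ θ * dv ^ (4/3 : ℝ) := by
    rw [Real.mul_rpow (by positivity) (by positivity),
      Real.mul_rpow (by positivity) (by positivity),
      Real.mul_rpow (le_of_lt hK₁) (by positivity)]
    have h64 : (64 : ℝ) ^ ((1:ℝ)/3) = 4 := by
      rw [show (64:ℝ) = 4 ^ (3:ℕ) by norm_num, ← Real.rpow_natCast (4:ℝ) 3,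
        ← Real.rpow_mul (by norm_num)]
      norm_num
    have hτdγ : (τd ^ γ) ^ ((1:ℝ)/3) = τd ^ θ := by
      rw [← Real.rpow_mul hτd0.le, hγ]
      ring_nf
    have hdv4 : (dv ^ 4) ^ ((1:ℝ)/3) = dv ^ (4/3 : ℝ) := by
      rw [← Real.rpow_natCast dv 4, ← Real.rpow_mul hdv.le]
      norm_num
    rw [h64, hτdγ, hdv4]
    ring
  have h3 : τd ^ θ ≤ L ^ θ * 3 ^ (θ * βk) * dv ^ (θ * βk) := by
    calc τd ^ θ ≤ (L * (3 * dv) ^ βk) ^ θ :=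
          Real.rpow_le_rpow hτd0.le hτdle hθ0
      _ = L ^ θ * (3 ^ βk * dv ^ βk) ^ θ := by
          rw [Real.mul_rpow hL0.le (by positivity), Real.mul_rpow (by norm_num) hdv.le]
      _ = L ^ θ * 3 ^ (θ * βk) * dv ^ (θ * βk) := by
          rw [Real.mul_rpow (by positivity) (by positivity),
            ← Real.rpow_mul (by norm_num : (0:ℝ) ≤ 3), ← Real.rpow_mul hdv.le]
          rw [mul_comm βk θ]
          ring
  have h4 : 3 ^ (θ * βk) ≤ (3:ℝ) ^ (θ * α) :=
    Real.rpow_le_rpow_of_exponent_le (by norm_num) (by nlinarith)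
  calc uv ≤ 4 * K₁ ^ ((1:ℝ)/3) * τd ^ θ * dv ^ (4/3:ℝ) := by rw [← h2]; exact h1
    _ ≤ 4 * K₁ ^ ((1:ℝ)/3) * (L ^ θ * 3 ^ (θ * βk) * dv ^ (θ * βk)) * dv ^ (4/3:ℝ) := by
        gcongr 4 * K₁ ^ ((1:ℝ)/3) * ?_ * dv ^ (4/3:ℝ)
    _ = 4 * K₁ ^ ((1:ℝ)/3) * 3 ^ (θ * βk) * L ^ θ * dv ^ (4/3 + θ * βk) := by
        rw [Real.rpow_add hdv]
        ring
    _ ≤ 4 * K₁ ^ ((1:ℝ)/3) * 3 ^ (θ * α) * L ^ θ * dv ^ (4/3 + θ * βk) := by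
        gcongr 4 * K₁ ^ ((1:ℝ)/3) * ?_ * L ^ θ * dv ^ (4/3 + θ * βk)
    _ ≤ L ^ (1 - θ) * L ^ θ * dv ^ (4/3 + θ * βk) := by
        gcongr ?_ * L ^ θ * dv ^ (4/3 + θ * βk)
    _ = L * dv ^ (4/3 + θ * βk) := by
        rw [← Real.rpow_add hL0]
        norm_num


/-- Sharp regularity across the free boundary (Theorem 3.1). -/
theorem regularity_across_free_boundary {n : ℕ} (Ω : Set (EuclideanSpace ℝ (Fin n)))
    (hΩo : IsOpen Ω)
    (f : ℝ → ℝ) (M γ : ℝ) (hM : 0 < M) (hγ0 : 0 ≤ γ) (hγ3 : γ < 3)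
    (hfc : ContinuousOn f (Ici 0)) (hf : Cond12 f M γ)
    (u : EuclideanSpace ℝ (Fin n) → ℝ)
    (huc : ContinuousOn u Ω) (hu0 : ∀ x ∈ Ω, 0 ≤ u x)
    (hub : ∃ B, ∀ x ∈ Ω, u x ≤ B)
    (hsol : IsViscSol Ω u (fun _ t => f t))
    (x₀ : EuclideanSpace ℝ (Fin n))
    (hx₀ : x₀ ∈ frontier {x | x ∈ Ω ∧ 0 < u x} ∩ Ω) :
    ∃ C > (0 : ℝ), ∃ ρ > (0 : ℝ), ball x₀ ρ ⊆ Ω ∧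
      ∀ x ∈ ball x₀ ρ, u x ≤ C * dist x x₀ ^ (4 / (3 - γ)) := by
  obtain ⟨hfr, hΩm⟩ := hx₀
  -- u vanishes at the free boundary point
  have hux₀ : u x₀ = 0 := by
    by_contra hne
    have hpos : 0 < u x₀ := lt_of_le_of_ne (hu0 x₀ hΩm) (Ne.symm hne)
    have hnb : {x | x ∈ Ω ∧ 0 < u x} ∈ 𝓝 x₀ := by
      have h1 : Ω ∈ 𝓝 x₀ := hΩo.mem_nhds hΩm
      have h2 : ∀ᶠ v in 𝓝 x₀, 0 < u v :=
        (huc.continuousAt h1).eventually (eventually_gt_nhds hpos)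
      filter_upwards [h1, h2] with v hv1 hv2
      exact ⟨hv1, hv2⟩
    exact hfr.2 (mem_interior_iff_mem_nhds.2 hnb)
  -- global bound
  obtain ⟨B, hB⟩ := hub
  set T := max B 1 with hT_def
  have hT : 0 < T := lt_of_lt_of_le zero_lt_one (le_max_right _ _)
  obtain ⟨δ₀, hδ₀, K, hK0, hKb⟩ := cond12_bound f M γ hM hγ0 hfc hf T hT
  set K₁ := K + 1 with hK₁_def
  have hK₁ : 0 < K₁ := by linarith
  set τ₀ := min (δ₀ * T) 1 with hτ₀_def
  have hτ₀0 : 0 < τ₀ := lt_min (by positivity) zero_lt_one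
  -- choose r₀
  obtain ⟨ε₀, hε₀, hε₀Ω⟩ := Metric.isOpen_iff.1 hΩo x₀ hΩm
  have hcy : ContinuousAt u x₀ := huc.continuousAt (hΩo.mem_nhds hΩm)
  obtain ⟨δu, hδu, hδu2⟩ := Metric.continuousAt_iff.1 hcy τ₀ hτ₀0
  set r₀ := min (ε₀ / 2) (min (δu / 2) 1) with hr₀_def
  have hr₀ : 0 < r₀ := lt_min (by positivity) (lt_min (by positivity) zero_lt_one)
  have hr₀1 : r₀ ≤ 1 := le_trans (min_le_right _ _) (min_le_right _ _)
  have hrΩ : closedBall x₀ r₀ ⊆ Ω := by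
    intro v hv
    apply hε₀Ω
    rw [mem_ball]
    have := mem_closedBall.1 hv
    have hh : r₀ ≤ ε₀ / 2 := min_le_left _ _
    linarith
  have hubd : ∀ v ∈ closedBall x₀ r₀, u v ≤ τ₀ := by
    intro v hv
    have h1 : dist v x₀ < δu := by
      have := mem_closedBall.1 hv
      have hh : r₀ ≤ δu / 2 := le_trans (min_le_right _ _) (min_le_left _ _)
      linarith
    have h2 := hδu2 h1
    rw [hux₀, Real.dist_eq, sub_zero] at h2
    exact le_of_lt (lt_of_le_of_lt (le_abs_self _) h2)
  -- iteration parameters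
  set θ := γ / 3 with hθ_def
  have hθ0 : 0 ≤ θ := by positivity
  have hθ1 : θ < 1 := by rw [hθ_def]; linarith
  set α := 4 / (3 - γ) with hα_def
  have h3γ : 0 < 3 - γ := by linarith
  have hα0 : 0 < α := by positivity
  have h1θα : (1 - θ) * α = 4 / 3 := by
    rw [hθ_def, hα_def]
    field_simp
  have hγθ : γ = 3 * θ := by rw [hθ_def]; field_simp
  set β : ℕ → ℝ := fun k => α * (1 - θ ^ k) with hβ_def
  have hβ0 : β 0 = 0 := by simp [hβ_def]
  have hθk1 : ∀ k : ℕ, θ ^ k ≤ 1 := fun k => pow_le_one₀ hθ0 hθ1.le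
  have hθk0 : ∀ k : ℕ, 0 ≤ θ ^ k := fun k => pow_nonneg hθ0 k
  have hβnn : ∀ k, 0 ≤ β k := by
    intro k
    show 0 ≤ α * (1 - θ ^ k)
    exact mul_nonneg hα0.le (by linarith [hθk1 k])
  have hβα : ∀ k, β k ≤ α := by
    intro k
    show α * (1 - θ ^ k) ≤ α
    nlinarith [mul_nonneg hα0.le (hθk0 k)]
  have hβsucc : ∀ k, β (k + 1) = 4 / 3 + θ * β k := by
    intro k
    show α * (1 - θ ^ (k+1)) = 4 / 3 + θ * (α * (1 - θ ^ k))
    rw [pow_succ]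
    linear_combination h1θα
  set X := 4 * K₁ ^ ((1:ℝ)/3) * 3 ^ (θ * α) with hX_def
  have hX0 : 0 < X := by
    apply mul_pos (mul_pos (by norm_num) (Real.rpow_pos_of_pos hK₁ _))
    exact Real.rpow_pos_of_pos (by norm_num) _
  set L := max (max 1 τ₀) (X ^ ((1:ℝ)/(1 - θ))) with hL_def
  have hL1 : 1 ≤ L := le_trans (le_max_left _ _) (le_max_left _ _)
  have hLτ : τ₀ ≤ L := le_trans (le_max_right _ _) (le_max_left _ _)
  have hL0 : 0 < L := lt_of_lt_of_le zero_lt_one hL1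
  have hLX : X ≤ L ^ (1 - θ) := by
    have h1 : X ^ ((1:ℝ)/(1 - θ)) ≤ L := le_max_right _ _
    have h2 : X = (X ^ ((1:ℝ)/(1 - θ))) ^ (1 - θ) := by
      rw [← Real.rpow_mul hX0.le]
      rw [one_div, inv_mul_cancel₀ (by linarith : (1:ℝ) - θ ≠ 0), Real.rpow_one]
    rw [h2]
    exact Real.rpow_le_rpow (Real.rpow_nonneg hX0.le _) h1 (by linarith)
  -- the induction
  have IH : ∀ k : ℕ, ∀ v, dist v x₀ ≤ r₀ / 3 ^ k →
      u v ≤ min τ₀ (L * dist v x₀ ^ β k) := by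
    intro k
    induction k with
    | zero =>
      intro v hv
      have hvball : v ∈ closedBall x₀ r₀ := by
        rw [mem_closedBall]
        simpa using hv
      refine le_min (hubd v hvball) ?_
      rw [hβ0, Real.rpow_zero, mul_one]
      exact le_trans (hubd v hvball) hLτ
    | succ k ih =>
      intro v hv
      rcases eq_or_lt_of_le (dist_nonneg : 0 ≤ dist v x₀) with h0 | h0
      · have hveq : v = x₀ := by
          rw [← dist_eq_zero]
          exact h0.symm
        have huv : u v = 0 := by rw [hveq, hux₀]
        rw [huv]
        apply le_min hτ₀0.le
        have hβp : 0 < β (k + 1) := by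
          apply mul_pos hα0
          have : θ ^ (k+1) < 1 := pow_lt_one₀ hθ0 hθ1 (Nat.succ_ne_zero k)
          linarith
        rw [← h0, Real.zero_rpow hβp.ne', mul_zero]
      · set dv := dist v x₀ with hdv_def
        have hp3 : (0:ℝ) < 3 ^ k := by positivity
        have h3dv : 3 * dv ≤ r₀ / 3 ^ k := by
          have h1 : dv ≤ r₀ / 3 ^ (k + 1) := hv
          rw [pow_succ] at h1
          rw [le_div_iff₀ hp3]
          rw [le_div_iff₀ (by positivity)] at h1
          nlinarith
        have hsub : closedBall v (2 * dv) ⊆ closedBall x₀ r₀ := by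
          intro z hz
          rw [mem_closedBall] at hz ⊢
          have h1 : dist z x₀ ≤ dist z v + dv := dist_triangle z v x₀
          have h2 : r₀ / 3 ^ k ≤ r₀ := by
            rw [div_le_iff₀ hp3]
            nlinarith [one_le_pow₀ (by norm_num : (1:ℝ) ≤ 3) (n := k)]
          linarith
        have hzdist : ∀ z ∈ closedBall v (2 * dv), dist z x₀ ≤ 3 * dv := by
          intro z hz
          rw [mem_closedBall] at hz
          have h1 : dist z x₀ ≤ dist z v + dv := dist_triangle z v x₀
          linarith
        set τd := min τ₀ (L * (3 * dv) ^ β k) with hτd_def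
        have hτd0 : 0 < τd := lt_min hτ₀0 (by positivity)
        have hτdδT : τd ≤ δ₀ * T := le_trans (min_le_left _ _) (min_le_left _ _)
        have hτdbound : ∀ z ∈ closedBall v (2 * dv), u z ≤ τd := by
          intro z hz
          have h1 := ih z (le_trans (hzdist z hz) h3dv)
          apply le_trans h1
          apply min_le_min le_rfl
          apply mul_le_mul_of_nonneg_left ?_ hL0.le
          exact Real.rpow_le_rpow dist_nonneg (hzdist z hz) (hβnn k)
        have hG0 : (0:ℝ) ≤ K₁ * τd ^ γ := by positivity
        have hfG : ∀ t, 0 ≤ t → t ≤ τd → f t ≤ K₁ * τd ^ γ := by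
          intro t ht htτ
          have h1 := hKb τd hτd0 hτdδT t ht htτ
          have h2 : 0 < τd ^ γ := Real.rpow_pos_of_pos hτd0 γ
          have h3 : K₁ * τd ^ γ = K * τd ^ γ + τd ^ γ := by rw [hK₁_def]; ring
          linarith
        have hkey := key_estimate Ω hΩo f u huc hu0 hsol.1 x₀ v h0
          (le_trans hsub hrΩ) hux₀ τd (K₁ * τd ^ γ) hG0 hτdbound hfG
        have harith := step_arith (u v) dv τ₀ L K₁ θ α (β k) γ
          (hu0 v (hrΩ (hsub (mem_closedBall_self (by positivity)))))
          h0 hτ₀0 hL1 hK₁ hθ0 hθ1 hγθ (hβnn k) (hβα k) hLX (by rw [← hτd_def]; exact hkey)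
        refine le_min ?_ ?_
        · exact hubd v (hsub (mem_closedBall_self (by positivity)))
        · rw [hβsucc k]
          exact harith
  -- conclusion
  refine ⟨L * max 1 (r₀ ^ (-α)) * 3 ^ (α / (1 - θ)), ?_, r₀, hr₀, ?_, ?_⟩
  · have h1 : (0:ℝ) < max 1 (r₀ ^ (-α)) := lt_of_lt_of_le zero_lt_one (le_max_left _ _)
    have h2 : (0:ℝ) < (3:ℝ) ^ (α / (1 - θ)) := Real.rpow_pos_of_pos (by norm_num) _
    positivity
  · exact fun v hv => hrΩ (ball_subset_closedBall hv)
  · intro x hx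
    set dx := dist x x₀ with hdx_def
    rcases eq_or_lt_of_le (dist_nonneg : 0 ≤ dx) with h0 | h0
    · have hxeq : x = x₀ := by rw [← dist_eq_zero]; exact h0.symm
      rw [hxeq, hux₀]
      have h1 : (0:ℝ) < max 1 (r₀ ^ (-α)) := lt_of_lt_of_le zero_lt_one (le_max_left _ _)
      have h2 : (0:ℝ) < (3:ℝ) ^ (α / (1 - θ)) := Real.rpow_pos_of_pos (by norm_num) _
      exact mul_nonneg (by positivity) (Real.rpow_nonneg dist_nonneg α)
    · have hdxr : dx < r₀ := mem_ball.1 hx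
      have hex : ∃ k : ℕ, r₀ < dx * 3 ^ (k + 1) := by
        obtain ⟨k, hk⟩ := pow_unbounded_of_one_lt (r₀ / dx) (by norm_num : (1:ℝ) < 3)
        refine ⟨k, ?_⟩
        rw [div_lt_iff₀ h0] at hk
        have h3 : (3:ℝ) ^ k ≤ 3 ^ (k + 1) :=
          pow_le_pow_right₀ (by norm_num) (Nat.le_succ k)
        have h4 : (3:ℝ) ^ k * dx ≤ dx * 3 ^ (k + 1) := by
          rw [mul_comm]
          exact mul_le_mul_of_nonneg_left h3 (le_of_lt h0)
        linarith
      set k := Nat.find hex with hk_def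
      have hk1 : r₀ < dx * 3 ^ (k + 1) := Nat.find_spec hex
      have hk2 : dx ≤ r₀ / 3 ^ k := by
        rcases Nat.eq_zero_or_pos k with hk0 | hkpos
        · rw [hk0]
          simpa using hdxr.le
        · obtain ⟨j, hj⟩ := Nat.exists_eq_succ_of_ne_zero hkpos.ne'
          have hjk : j < k := by rw [hj]; exact Nat.lt_succ_self j
          have hmin := Nat.find_min hex hjk
          push_neg at hmin
          rw [hj, le_div_iff₀ (by positivity)]
          exact hmin
      have hbnd := le_trans (IH k x hk2) (min_le_right _ _)
      -- estimate dx ^ β k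
      set e := α * θ ^ k with he_def
      have he0 : 0 ≤ e := mul_nonneg hα0.le (hθk0 k)
      have heα : e ≤ α := by
        rw [he_def]
        exact mul_le_of_le_one_right hα0.le (hθk1 k)
      have hβe : β k = α + (- e) := by rw [hβ_def, he_def]; ring
      have ha0 : (0:ℝ) < r₀ / 3 ^ (k + 1) := by positivity
      have ha1 : r₀ / 3 ^ (k + 1) ≤ dx := by
        rw [div_le_iff₀ (by positivity)]
        linarith [hk1]
      have hstep1 : dx ^ (-e) ≤ (r₀ / 3 ^ (k + 1)) ^ (-e) :=
        Real.rpow_le_rpow_of_nonpos ha0 ha1 (by linarith)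
      have hstep2 : (r₀ / 3 ^ (k + 1)) ^ (-e) = r₀ ^ (-e) * (((3:ℝ) ^ (k+1)) ^ e) := by
        rw [Real.rpow_neg (by positivity), Real.div_rpow hr₀.le (by positivity),
          Real.rpow_neg hr₀.le, inv_div, div_eq_mul_inv, mul_comm]
      have hstep3 : (((3:ℝ) ^ (k+1)) ^ e) = (3:ℝ) ^ ((((k:ℕ):ℝ) + 1) * e) := by
        rw [← Real.rpow_natCast (3:ℝ) (k+1), ← Real.rpow_mul (by norm_num : (0:ℝ) ≤ 3)]
        push_cast
        ring_nf
      have hstep4 : (3:ℝ) ^ ((((k:ℕ):ℝ) + 1) * e) ≤ (3:ℝ) ^ (α / (1 - θ)) := by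
        apply Real.rpow_le_rpow_of_exponent_le (by norm_num)
        have hg := geom_aux θ hθ0 hθ1 k
        rw [he_def, le_div_iff₀ (by linarith : (0:ℝ) < 1 - θ)]
        calc ((k:ℝ) + 1) * (α * θ ^ k) * (1 - θ)
            = ((k:ℝ) + 1) * θ ^ k * (1 - θ) * α := by ring
          _ ≤ 1 * α := mul_le_mul_of_nonneg_right hg hα0.le
          _ = α := one_mul α
      have hstep5 : r₀ ^ (-e) ≤ max 1 (r₀ ^ (-α)) :=
        le_trans (Real.rpow_le_rpow_of_exponent_ge hr₀ hr₀1 (neg_le_neg heα))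
          (le_max_right _ _)
      calc u x ≤ L * dx ^ β k := hbnd
        _ = L * (dx ^ α * dx ^ (-e)) := by rw [hβe, Real.rpow_add h0]
        _ ≤ L * (dx ^ α * (max 1 (r₀ ^ (-α)) * 3 ^ (α / (1 - θ)))) := by
            gcongr L * (dx ^ α * ?_)
            calc dx ^ (-e) ≤ (r₀ / 3 ^ (k + 1)) ^ (-e) := hstep1
              _ = r₀ ^ (-e) * (((3:ℝ) ^ (k+1)) ^ e) := hstep2
              _ ≤ max 1 (r₀ ^ (-α)) * 3 ^ (α / (1 - θ)) := by
                  apply mul_le_mul hstep5 (le_trans (le_of_eq hstep3) hstep4)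
                    (by positivity) (by positivity)
        _ = L * max 1 (r₀ ^ (-α)) * 3 ^ (α / (1 - θ)) * dx ^ α := by ring
end

section
/- Explicit radial profile: Let γ ∈ [0,3), λ > 0, x₀ ∈ ℝⁿ, and set Υ := (λ(3−γ)⁴/(64(1+γ)))^{1/(3−γ)}. Then the function w(x) := Υ|x − x₀|^{4/(3−γ)} is smooth on ℝⁿ \ {x₀} and satisfies the infinity Laplace equation Δ∞w(x) = λ w(x)^γ (classically, i.e. Σ_{i,j} ∂_iw(x)∂_jw(x)∂_{ij}w(x) = λ w(x)^γ) at every point x ≠ x₀. -/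
open Set Metric Filter MeasureTheory
open RealInnerProductSpace

/-- Explicit radial profile: `w(x) = Υ|x−x₀|^{4/(3−γ)}` solves `Δ∞w = λ w^γ` away from `x₀`. -/
theorem radial_profile {n : ℕ} (γ lam : ℝ) (hγ0 : 0 ≤ γ) (hγ3 : γ < 3) (hlam : 0 < lam)
    (Υ : ℝ) (hΥ : Υ = (lam * (3 - γ) ^ 4 / (64 * (1 + γ))) ^ (1 / (3 - γ)))
    (x₀ : EuclideanSpace ℝ (Fin n))
    (w : EuclideanSpace ℝ (Fin n) → ℝ)
    (hw : w = fun x => Υ * ‖x - x₀‖ ^ (4 / (3 - γ))) :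
    ContDiffOn ℝ (⊤ : ℕ∞) w ({x₀}ᶜ) ∧
      ∀ x : EuclideanSpace ℝ (Fin n), x ≠ x₀ → infLap w x = lam * w x ^ γ := by
  have h3γ : (0:ℝ) < 3 - γ := by linarith
  have h1γ : (0:ℝ) < 1 + γ := by linarith
  set β : ℝ := 2 / (3 - γ) with hβ
  have hβpos : 0 < β := by positivity
  have hK : (0:ℝ) < lam * (3 - γ) ^ 4 / (64 * (1 + γ)) := by positivity
  have hΥpos : 0 < Υ := hΥ ▸ Real.rpow_pos_of_pos hK _
  set q : EuclideanSpace ℝ (Fin n) → ℝ := fun x => ‖x - x₀‖ ^ 2 with hqdef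
  have hw' : w = fun x => Υ * q x ^ β := by
    rw [hw]; funext x
    have h2β : (2:ℝ) * β = 4 / (3 - γ) := by rw [hβ]; ring
    have : q x ^ β = ‖x - x₀‖ ^ (4 / (3 - γ)) :=
      calc q x ^ β = (‖x - x₀‖ ^ ((2:ℕ):ℝ)) ^ β := by rw [Real.rpow_natCast]
        _ = ‖x - x₀‖ ^ (((2:ℕ):ℝ) * β) := by rw [← Real.rpow_mul (norm_nonneg _)]
        _ = ‖x - x₀‖ ^ (4 / (3 - γ)) := by push_cast; rw [h2β]
    rw [this]
  have hqpos : ∀ x : EuclideanSpace ℝ (Fin n), x ≠ x₀ → 0 < q x := fun x hx =>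
    pow_pos (norm_pos_iff.mpr (sub_ne_zero.mpr hx)) 2
  have hq : ∀ x : EuclideanSpace ℝ (Fin n), HasFDerivAt q
      ((2:ℕ) • (innerSL ℝ (x - x₀)).comp (ContinuousLinearMap.id ℝ _)) x := fun x =>
    ((hasFDerivAt_id x).sub_const x₀).norm_sq
  -- first derivative
  have hDw : ∀ x : EuclideanSpace ℝ (Fin n), x ≠ x₀ →
      HasFDerivAt w ((Υ * (β * q x ^ (β-1))) •
        ((2:ℕ) • (innerSL ℝ (x - x₀)).comp (ContinuousLinearMap.id ℝ _))) x := by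
    intro x hx
    have h1 : HasDerivAt (fun t : ℝ => Υ * t ^ β) (Υ * (β * q x ^ (β-1))) (q x) :=
      (Real.hasDerivAt_rpow_const (Or.inl (hqpos x hx).ne')).const_mul Υ
    rw [hw']
    exact h1.comp_hasFDerivAt x (hq x)
  have hfd : ∀ x : EuclideanSpace ℝ (Fin n), x ≠ x₀ → ∀ u,
      fderiv ℝ w x u = 2*Υ*β * q x ^ (β-1) * ⟪x - x₀, u⟫ := by
    intro x hx u
    rw [(hDw x hx).fderiv]
    simp only [ContinuousLinearMap.smul_apply, ContinuousLinearMap.coe_smul', Pi.smul_apply,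
      ContinuousLinearMap.comp_apply, ContinuousLinearMap.id_apply, innerSL_apply_apply,
      smul_eq_mul, nsmul_eq_mul]
    push_cast
    ring
  constructor
  · intro x hx
    have : ContDiffAt ℝ (⊤ : ℕ∞) w x := by
      rw [hw']
      exact (contDiffAt_const (c := Υ)).mul
        (((contDiff_norm_sq ℝ).comp (contDiff_id.sub contDiff_const)).contDiffAt.rpow_const_of_ne
          (hqpos x hx).ne')
    exact this.contDiffWithinAt
  · intro x hx
    have ht : 0 < q x := hqpos x hx
    set t := q x with htdef
    set v : EuclideanSpace ℝ (Fin n) := x - x₀ with hv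
    set A : ℝ := 2*Υ*β * t ^ (β-1) with hA
    set B : ℝ := 4*Υ*β*(β-1) * t ^ (β-2) with hB
    have h1 : ∀ i : Fin n, fderiv ℝ w x (EuclideanSpace.single i 1) = A * v i := by
      intro i
      rw [hfd x hx, EuclideanSpace.inner_single_right, hA, htdef, hv]
      simp
    have h2 : ∀ i j : Fin n,
        fderiv ℝ (fun y => fderiv ℝ w y (EuclideanSpace.single i 1)) x (EuclideanSpace.single j 1)
          = B * v i * v j + (if i = j then A else 0) := by
      intro i j
      have heq : (fun y => fderiv ℝ w y (EuclideanSpace.single i 1)) =ᶠ[nhds x]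
          (fun y => (2*Υ*β * q y ^ (β-1)) * ⟪EuclideanSpace.single i (1:ℝ), y - x₀⟫) := by
        filter_upwards [isOpen_compl_singleton.mem_nhds hx] with y hy
        rw [hfd y hy, real_inner_comm]
      have hf1 : HasFDerivAt (fun y => 2*Υ*β * q y ^ (β-1))
          ((2*Υ*β * ((β-1) * q x ^ (β-2))) •
            ((2:ℕ) • (innerSL ℝ (x - x₀)).comp (ContinuousLinearMap.id ℝ _))) x := by
        have h' := ((Real.hasDerivAt_rpow_const (p := β-1)
          (Or.inl ht.ne')).const_mul (2*Υ*β)).comp_hasFDerivAt x (hq x)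
        rwa [show β-1-1 = β-2 by ring] at h'
      have hf2 : HasFDerivAt (fun y => ⟪EuclideanSpace.single i (1:ℝ), y - x₀⟫)
          ((innerSL ℝ (EuclideanSpace.single i (1:ℝ))).comp (ContinuousLinearMap.id ℝ _)) x :=
        (innerSL ℝ (EuclideanSpace.single i (1:ℝ))).hasFDerivAt.comp x
          ((hasFDerivAt_id x).sub_const x₀)
      rw [heq.fderiv_eq, (show HasFDerivAt (fun y => 2*Υ*β * q y ^ (β-1) * ⟪EuclideanSpace.single i (1:ℝ), y - x₀⟫) _ x from hf1.mul hf2).fderiv, hA, hB, htdef, hv]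
      simp only [ContinuousLinearMap.add_apply, ContinuousLinearMap.smul_apply,
        ContinuousLinearMap.comp_apply, ContinuousLinearMap.id_apply, innerSL_apply_apply,
        smul_eq_mul, nsmul_eq_mul, EuclideanSpace.inner_single_left,
        EuclideanSpace.inner_single_right, EuclideanSpace.single_apply, conj_trivial]
      by_cases hij : i = j
      · simp only [hij, if_true]
        push_cast
        ring
      · simp only [hij, Ne.symm hij, if_false]
        push_cast
        ring
    have hS : ∑ i : Fin n, v i * v i = t := by
      have h : (∑ i : Fin n, v i * v i) = ⟪v, v⟫ := by
        rw [PiLp.inner_apply]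
        simp [pow_two]
      rw [h, real_inner_self_eq_norm_sq]
    have hsum : infLap w x = A*A*B*(t*t) + A*A*A*t := by
      unfold infLap
      have hterm : ∀ i j : Fin n,
          fderiv ℝ w x (EuclideanSpace.single i 1) * fderiv ℝ w x (EuclideanSpace.single j 1) *
            fderiv ℝ (fun y => fderiv ℝ w y (EuclideanSpace.single i 1)) x
              (EuclideanSpace.single j 1)
          = (A*A*B) * ((v i * v i) * (v j * v j)) +
              (if i = j then A*A*A*(v i * v j) else 0) := by
        intro i j
        rw [h1 i, h1 j, h2 i j]
        by_cases hij : i = j <;> simp [hij] <;> ring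
      calc (∑ i : Fin n, ∑ j : Fin n, _) = ∑ i : Fin n, ∑ j : Fin n,
            ((A*A*B) * ((v i * v i) * (v j * v j)) +
              (if i = j then A*A*A*(v i * v j) else 0)) :=
          Finset.sum_congr rfl fun i _ => Finset.sum_congr rfl fun j _ => hterm i j
        _ = (∑ i : Fin n, ∑ j : Fin n, (A*A*B) * ((v i * v i) * (v j * v j))) +
            (∑ i : Fin n, ∑ j : Fin n, (if i = j then A*A*A*(v i * v j) else 0)) := by
          rw [← Finset.sum_add_distrib]
          exact Finset.sum_congr rfl fun i _ => Finset.sum_add_distrib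
        _ = A*A*B*(t*t) + A*A*A*t := by
          congr 1
          · calc ∑ i : Fin n, ∑ j : Fin n, (A*A*B) * ((v i * v i) * (v j * v j))
                = (A*A*B) * ((∑ i : Fin n, v i * v i) * (∑ j : Fin n, v j * v j)) := by
                  rw [Finset.sum_mul_sum, Finset.mul_sum]
                  exact Finset.sum_congr rfl fun i _ => by rw [Finset.mul_sum]
              _ = A*A*B*(t*t) := by rw [hS]
          · calc ∑ i : Fin n, ∑ j : Fin n, (if i = j then A*A*A*(v i * v j) else 0)
                = ∑ i : Fin n, A*A*A*(v i * v i) := by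
                  refine Finset.sum_congr rfl fun i _ => ?_
                  simp
              _ = A*A*A*t := by rw [← Finset.mul_sum, hS]
    -- scalar identities
    have hU : Υ ^ (3-γ) = lam * (3 - γ)^4 / (64*(1+γ)) := by
      rw [hΥ, ← Real.rpow_mul hK.le, one_div, inv_mul_cancel₀ h3γ.ne', Real.rpow_one]
    have hU3 : Υ^(3:ℕ) = Υ^γ * (lam * (3-γ)^4/(64*(1+γ))) := by
      rw [← hU, ← Real.rpow_natCast Υ 3, ← Real.rpow_add hΥpos]
      congr 1
      push_cast
      ring
    have hkey : 8*Υ^(3:ℕ)*β^3*(2*β-1) = lam * Υ^γ := by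
      have hb : β^3*(2*β-1) = 8*(1+γ)/(3-γ)^4 := by
        rw [hβ]; field_simp; ring
      calc 8*Υ^(3:ℕ)*β^3*(2*β-1) = 8*Υ^(3:ℕ)*(β^3*(2*β-1)) := by ring
        _ = lam * Υ^γ := by rw [hb, hU3]; field_simp; ring
    have hPt : t ^ (β-1) = t^β / t := by rw [Real.rpow_sub ht, Real.rpow_one]
    have hPt2 : t ^ (β-2) = t^β / t^(2:ℕ) := by
      rw [Real.rpow_sub ht, show (2:ℝ) = ((2:ℕ):ℝ) by norm_num, Real.rpow_natCast]
    have hexp : β*γ = β*3 - 2 := by rw [hβ]; field_simp; ring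
    have hPg : t^(β*γ) = (t^β)^(3:ℕ) / t^(2:ℕ) := by
      rw [hexp, Real.rpow_sub ht]
      congr 1
      · rw [Real.rpow_mul ht.le, show (3:ℝ) = ((3:ℕ):ℝ) by norm_num, Real.rpow_natCast]
      · rw [show (2:ℝ) = ((2:ℕ):ℝ) by norm_num, Real.rpow_natCast]
    have hrhs : w x ^ γ = Υ^γ * ((t^β)^(3:ℕ) / t^(2:ℕ)) := by
      rw [hw']
      show (Υ * t ^ β) ^ γ = _
      rw [Real.mul_rpow hΥpos.le (Real.rpow_nonneg ht.le _), ← Real.rpow_mul ht.le, hPg]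
    have hP : (0:ℝ) < t^β := Real.rpow_pos_of_pos ht _
    rw [hsum, hrhs, hA, hB, hPt, hPt2]
    generalize hPP : t^β = P at hP ⊢
    clear_value t
    clear_value β
    have htne : t ≠ 0 := ht.ne'
    field_simp
    linear_combination hkey
end

section
/- Exponential barrier with gradient bounded below: Let Ω ⊂ ℝⁿ be open, S > 0, η > 0, and let w ∈ C²(Ω) satisfy |w(x)| ≤ S, Δ∞w(x) ≥ 0 and |∇w(x)| ≥ η for all x ∈ Ω. Then the function v(x) := e^{w(x)} + w(x) satisfies Δ∞v(x) ≥ e^{−S} η⁴ for all x ∈ Ω. -/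
open Set Metric Filter MeasureTheory

set_option maxHeartbeats 1000000 in
/-- Exponential barrier with gradient bounded below:
if `|w| ≤ S`, `Δ∞w ≥ 0` and `|∇w| ≥ η` in `Ω`, then `v = e^w + w`
satisfies `Δ∞v ≥ e^{−S} η⁴` in `Ω`. -/
theorem exp_barrier {n : ℕ} (Ω : Set (EuclideanSpace ℝ (Fin n))) (hΩo : IsOpen Ω)
    (S η : ℝ) (hS : 0 < S) (hη : 0 < η)
    (w : EuclideanSpace ℝ (Fin n) → ℝ) (hw : ContDiffOn ℝ 2 w Ω)
    (hwb : ∀ x ∈ Ω, |w x| ≤ S)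
    (hwsub : ∀ x ∈ Ω, 0 ≤ infLap w x)
    (hwgrad : ∀ x ∈ Ω, η ≤ ‖gradient w x‖) :
    ∀ x ∈ Ω, Real.exp (-S) * η ^ 4 ≤ infLap (fun y => Real.exp (w y) + w y) x := by
  intro x hx
  set e : Fin n → EuclideanSpace ℝ (Fin n) := fun i => EuclideanSpace.single i 1 with he
  have hwa : ∀ y ∈ Ω, ContDiffAt ℝ 2 w y := fun y hy => hw.contDiffAt (hΩo.mem_nhds hy)
  have hder : ∀ y ∈ Ω, HasFDerivAt w (fderiv ℝ w y) y := fun y hy =>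
    ((hwa y hy).differentiableAt (by norm_num)).hasFDerivAt
  set a := Real.exp (w x) with ha
  set L := fderiv ℝ w x with hL
  -- first derivative of v on Ω
  have hfd : ∀ y ∈ Ω, HasFDerivAt (fun z => Real.exp (w z) + w z)
      ((Real.exp (w y) + 1) • fderiv ℝ w y) y := by
    intro y hy
    have h1 : HasFDerivAt (fun z => Real.exp (w z)) (Real.exp (w y) • fderiv ℝ w y) y :=
      (Real.hasDerivAt_exp (w y)).comp_hasFDerivAt y (hder y hy)
    have := h1.add (hder y hy)
    rw [add_smul, one_smul]; exact this
  have hfval : ∀ y ∈ Ω, fderiv ℝ (fun z => Real.exp (w z) + w z) y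
      = (Real.exp (w y) + 1) • fderiv ℝ w y := fun y hy => (hfd y hy).fderiv
  -- second derivative ingredients
  have hD2 : HasFDerivAt (fderiv ℝ w) (fderiv ℝ (fderiv ℝ w) x) x := by
    have h := (hwa x hx).fderiv_right (m := 1) le_rfl
    exact (h.differentiableAt (by norm_num)).hasFDerivAt
  set D2 := fderiv ℝ (fderiv ℝ w) x with hD2def
  set g : Fin n → ℝ := fun i => L (e i) with hg
  set H : Fin n → Fin n → ℝ := fun i j => D2 (e j) (e i) with hH
  -- fderiv of (fun y => fderiv w y (e i)) at x
  have hWi : ∀ i, HasFDerivAt (fun y => fderiv ℝ w y (e i)) (D2.flip (e i)) x := by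
    intro i
    have := hD2.clm_apply (hasFDerivAt_const (e i) x)
    simpa using this
  -- second partials of v
  have hsecond : ∀ i j, fderiv ℝ (fun y =>
      fderiv ℝ (fun z => Real.exp (w z) + w z) y (e i)) x (e j)
      = a * g i * g j + (a + 1) * H i j := by
    intro i j
    have heq : (fun y => fderiv ℝ (fun z => Real.exp (w z) + w z) y (e i))
        =ᶠ[nhds x] (fun y => (Real.exp (w y) + 1) * fderiv ℝ w y (e i)) := by
      filter_upwards [hΩo.mem_nhds hx] with y hy
      rw [hfval y hy]; simp
    rw [heq.fderiv_eq]
    have h1 : HasFDerivAt (fun y => Real.exp (w y) + 1) (a • L) x := by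
      have := ((Real.hasDerivAt_exp (w x)).comp_hasFDerivAt x (hder x hx)).add_const 1
      exact this
    have h2 := h1.mul (hWi i)
    rw [show (fun y => (Real.exp (w y) + 1) * fderiv ℝ w y (e i)) =
      ((fun y => Real.exp (w y) + 1) * fun y => fderiv ℝ w y (e i)) from rfl, h2.fderiv]
    simp [hg, hH, ha, hL]
    ring
  -- first partials of v
  have hfirst : ∀ i, fderiv ℝ (fun z => Real.exp (w z) + w z) x (e i) = (a + 1) * g i := by
    intro i; rw [hfval x hx]; simp [hg, ha, hL]
  -- infLap w in terms of g, H
  have hwlap : infLap w x = ∑ i, ∑ j, g i * g j * H i j := by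
    unfold infLap
    refine Finset.sum_congr rfl fun i _ => Finset.sum_congr rfl fun j _ => ?_
    rw [(hWi i).fderiv]
    simp [hg, hH, he, hL]
  -- gradient norm
  have hgradsq : ∑ i, g i ^ 2 = ‖gradient w x‖ ^ 2 := by
    have h1 : ∀ i, g i = gradient w x i := by
      intro i
      have h := InnerProductSpace.toDual_symm_apply (𝕜 := ℝ)
        (E := EuclideanSpace ℝ (Fin n)) (x := e i) (y := fderiv ℝ w x)
      have h2 : (inner ℝ (gradient w x) (e i) : ℝ) = gradient w x i := by
        simp only [he]; rw [EuclideanSpace.inner_single_right]; simp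
      rw [← h2, gradient, h]
    rw [← real_inner_self_eq_norm_sq, PiLp.inner_apply]
    refine Finset.sum_congr rfl fun i _ => ?_
    rw [h1 i]; simp [sq]
  -- compute infLap v
  have hvlap : infLap (fun y => Real.exp (w y) + w y) x
      = a * (a+1)^2 * (∑ i, g i ^ 2)^2 + (a+1)^3 * (∑ i, ∑ j, g i * g j * H i j) := by
    have hterm : infLap (fun y => Real.exp (w y) + w y) x
        = ∑ i, ∑ j, ((a+1) * g i) * ((a+1) * g j) * (a * g i * g j + (a + 1) * H i j) := by
      unfold infLap
      refine Finset.sum_congr rfl fun i _ => Finset.sum_congr rfl fun j _ => ?_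
      rw [hfirst i, hfirst j, hsecond i j]
    rw [hterm, sq (∑ i, g i ^ 2), Finset.sum_mul_sum]
    rw [Finset.mul_sum, Finset.mul_sum, ← Finset.sum_add_distrib]
    refine Finset.sum_congr rfl fun i _ => ?_
    rw [Finset.mul_sum, Finset.mul_sum, ← Finset.sum_add_distrib]
    refine Finset.sum_congr rfl fun j _ => ?_
    ring
  rw [hvlap, ← hwlap, hgradsq]
  have hI := hwsub x hx
  have hN := hwgrad x hx
  have haS : Real.exp (-S) ≤ a := Real.exp_le_exp.mpr (by
    have := (abs_le.mp (hwb x hx)).1; linarith)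
  have hpow : η ^ 4 ≤ ‖gradient w x‖ ^ 4 := pow_le_pow_left₀ hη.le hN 4
  have hapos : 0 < a := Real.exp_pos _
  nlinarith [mul_nonneg (pow_nonneg (by linarith : (0:ℝ) ≤ a + 1) 3) hI,
    mul_le_mul_of_nonneg_left hpow hapos.le,
    mul_le_mul_of_nonneg_right haS (pow_nonneg (pow_nonneg hη.le 2) 2),
    sq_nonneg (a+1), mul_pos hapos hapos,
    mul_nonneg (mul_nonneg hapos.le (sq_nonneg (a+1))) (pow_nonneg (by positivity : (0:ℝ) ≤ ‖gradient w x‖^2) 2)]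
end

section
/- Scaling of subsolutions in the borderline case: Let Ω ⊂ ℝⁿ be open and let f : [0,∞) → ℝ be continuous and satisfy condition (6.1) with constant M > 0, with threshold δ₀ > 0 valid for 0 < t ≤ T. Let v ∈ C(Ω) be a non-negative bounded viscosity subsolution of Δ∞v = M f(v) in Ω with ‖v‖_∞ ≤ T. Then for every 0 < δ ≤ δ₀ the function δv is a viscosity subsolution of Δ∞u = f(u) in Ω. -/
open Set Metric Filter MeasureTheory

/-- Condition (6.1): for every `T > 0` there is `δ₀ > 0` such that
`0 ≤ f(δt) ≤ M δ³ f(t)` for all `0 < t ≤ T` and `0 < δ ≤ δ₀`. -/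
def Cond61 (f : ℝ → ℝ) (M : ℝ) : Prop :=
  ∀ T > 0, ∃ δ₀ > 0, ∀ t : ℝ, 0 < t → t ≤ T → ∀ δ : ℝ, 0 < δ → δ ≤ δ₀ →
    0 ≤ f (δ * t) ∧ f (δ * t) ≤ M * δ ^ 3 * f t


open Topology in
lemma infLap_const_mul {n : ℕ} (φ : EuclideanSpace ℝ (Fin n) → ℝ) (c : ℝ)
    (hφ : ContDiff ℝ 2 φ) (x : EuclideanSpace ℝ (Fin n)) :
    infLap (fun y => c * φ y) x = c ^ 3 * infLap φ x := by
  have hd1 : Differentiable ℝ φ := hφ.differentiable (by simp)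
  have hd2 : Differentiable ℝ (fun y => fderiv ℝ φ y) :=
    (hφ.fderiv_right (m := 1) le_rfl).differentiable one_ne_zero
  have h1 : ∀ e y, fderiv ℝ (fun z => c * φ z) y e = c * fderiv ℝ φ y e := by
    intro e y
    rw [fderiv_const_mul (hd1 y)]
    simp
  have h2 : ∀ e e' y, fderiv ℝ (fun z => fderiv ℝ (fun w => c * φ w) z e) y e'
      = c * fderiv ℝ (fun z => fderiv ℝ φ z e) y e' := by
    intro e e' y
    have : (fun z => fderiv ℝ (fun w => c * φ w) z e) = fun z => c * fderiv ℝ φ z e := by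
      funext z; exact h1 e z
    rw [this, fderiv_const_mul (by exact (hd2.clm_apply (differentiable_const _)) y)]
    simp
  unfold infLap
  rw [Finset.mul_sum]
  refine Finset.sum_congr rfl fun i _ => ?_
  rw [Finset.mul_sum]
  refine Finset.sum_congr rfl fun j _ => ?_
  rw [h1, h1, h2]
  ring


open Topology in
lemma f_zero (f : ℝ → ℝ) (M T δ₀ : ℝ) (hM : 0 < M) (hT : 0 < T) (hδ₀ : 0 < δ₀)
    (hfc : ContinuousOn f (Ici 0))
    (hf : ∀ t : ℝ, 0 < t → t ≤ T → ∀ δ : ℝ, 0 < δ → δ ≤ δ₀ →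
      0 ≤ f (δ * t) ∧ f (δ * t) ≤ M * δ ^ 3 * f t) : f 0 = 0 := by
  set δ := min δ₀ (min 1 (1 / (2 * M))) with hδdef
  have hδpos : 0 < δ := lt_min hδ₀ (lt_min one_pos (by positivity))
  have hδle : δ ≤ δ₀ := min_le_left _ _
  have hδ1 : δ ≤ 1 := le_trans (min_le_right _ _) (min_le_left _ _)
  have hδM : δ ≤ 1 / (2 * M) := le_trans (min_le_right _ _) (min_le_right _ _)
  have hMδ : M * δ ^ 3 ≤ 1 / 2 := by
    have h3 : δ ^ 3 ≤ δ := by nlinarith [sq_nonneg δ, sq_nonneg (δ - 1)]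
    have h4 : δ * (2 * M) ≤ 1 := by
      rw [le_div_iff₀ (by positivity)] at hδM; linarith
    nlinarith
  -- limits as t → 0⁺
  have hfcont : Tendsto f (𝓝[Ici 0] 0) (𝓝 (f 0)) := hfc 0 (by simp)
  have hmap : Tendsto (fun t : ℝ => δ * t) (𝓝[>] (0:ℝ)) (𝓝[Ici 0] 0) := by
    apply tendsto_nhdsWithin_of_tendsto_nhds_of_eventually_within
    · have : Tendsto (fun t : ℝ => δ * t) (𝓝 0) (𝓝 (δ * 0)) :=
        (continuous_const.mul continuous_id).tendsto 0
      simpa using this.mono_left nhdsWithin_le_nhds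
    · filter_upwards [self_mem_nhdsWithin] with t (ht : 0 < t)
      exact Set.mem_Ici.mpr (mul_pos hδpos ht).le
  have hmap' : Tendsto (fun t : ℝ => t) (𝓝[>] (0:ℝ)) (𝓝[Ici 0] 0) := by
    apply tendsto_nhdsWithin_of_tendsto_nhds_of_eventually_within
    · exact tendsto_id.mono_left nhdsWithin_le_nhds
    · filter_upwards [self_mem_nhdsWithin] with t (ht : 0 < t) using Set.mem_Ici.mpr ht.le
  have hL1 : Tendsto (fun t => f (δ * t)) (𝓝[>] (0:ℝ)) (𝓝 (f 0)) := hfcont.comp hmap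
  have hL2 : Tendsto (fun t => M * δ ^ 3 * f t) (𝓝[>] (0:ℝ)) (𝓝 (M * δ ^ 3 * f 0)) :=
    (tendsto_const_nhds.mul (hfcont.comp hmap'))
  have hev : ∀ᶠ t in 𝓝[>] (0:ℝ), 0 ≤ f (δ * t) ∧ f (δ * t) ≤ M * δ ^ 3 * f t := by
    filter_upwards [Ioo_mem_nhdsGT hT] with t ht
    exact hf t ht.1 (le_of_lt ht.2) δ hδpos hδle
  have h1 : (0:ℝ) ≤ f 0 :=
    le_of_tendsto_of_tendsto tendsto_const_nhds hL1 (hev.mono fun t ht => ht.1)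
  have h2 : f 0 ≤ M * δ ^ 3 * f 0 :=
    le_of_tendsto_of_tendsto hL1 hL2 (hev.mono fun t ht => ht.2)
  nlinarith

/-- Scaling of subsolutions in the borderline case `γ = 3`. -/
theorem scaling_subsolution_borderline {n : ℕ} (Ω : Set (EuclideanSpace ℝ (Fin n)))
    (hΩo : IsOpen Ω)
    (f : ℝ → ℝ) (M T δ₀ : ℝ) (hM : 0 < M) (hT : 0 < T) (hδ₀ : 0 < δ₀)
    (hfc : ContinuousOn f (Ici 0))
    (hf : ∀ t : ℝ, 0 < t → t ≤ T → ∀ δ : ℝ, 0 < δ → δ ≤ δ₀ →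
      0 ≤ f (δ * t) ∧ f (δ * t) ≤ M * δ ^ 3 * f t)
    (v : EuclideanSpace ℝ (Fin n) → ℝ)
    (hvc : ContinuousOn v Ω) (hv0 : ∀ x ∈ Ω, 0 ≤ v x)
    (hvb : ∀ x ∈ Ω, v x ≤ T)
    (hsub : IsViscSubsol Ω v (fun _ t => M * f t)) :
    ∀ δ : ℝ, 0 < δ → δ ≤ δ₀ →
      IsViscSubsol Ω (fun x => δ * v x) (fun _ t => f t) := by
  intro δ hδ hδle φ hφ x₀ hx₀ heq hmax
  have hf0 : f 0 = 0 := f_zero f M T δ₀ hM hT hδ₀ hfc hf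
  set ψ : EuclideanSpace ℝ (Fin n) → ℝ := fun x => δ⁻¹ * φ x with hψdef
  have hψc : ContDiff ℝ 2 ψ := contDiff_const.mul hφ
  have hψeq : ψ x₀ = v x₀ := by
    simp only [hψdef, heq]
    field_simp
  have hψmax : IsLocalMax (fun x => v x - ψ x) x₀ := by
    filter_upwards [hmax] with y hy
    simp only [hψdef]
    have hy' : δ * v y - φ y ≤ δ * v x₀ - φ x₀ := hy
    have hδinv : (0:ℝ) < δ⁻¹ := by positivity
    calc v y - δ⁻¹ * φ y = δ⁻¹ * (δ * v y - φ y) := by field_simp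
      _ ≤ δ⁻¹ * (δ * v x₀ - φ x₀) := by
          exact mul_le_mul_of_nonneg_left hy' hδinv.le
      _ = v x₀ - δ⁻¹ * φ x₀ := by field_simp
  have hkey : M * f (ψ x₀) ≤ infLap ψ x₀ := hsub ψ hψc x₀ hx₀ hψeq hψmax
  have hscale : infLap ψ x₀ = δ⁻¹ ^ 3 * infLap φ x₀ := infLap_const_mul φ δ⁻¹ hφ x₀
  rw [hψeq, hscale] at hkey
  -- hkey : M * f (v x₀) ≤ δ⁻¹ ^ 3 * infLap φ x₀
  have hkey' : δ ^ 3 * (M * f (v x₀)) ≤ infLap φ x₀ := by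
    have h3 : (0:ℝ) < δ ^ 3 := by positivity
    have := mul_le_mul_of_nonneg_left hkey h3.le
    calc δ ^ 3 * (M * f (v x₀)) ≤ δ ^ 3 * (δ⁻¹ ^ 3 * infLap φ x₀) := this
      _ = infLap φ x₀ := by field_simp
  have hφx : φ x₀ = δ * v x₀ := heq
  rcases eq_or_lt_of_le (hv0 x₀ hx₀) with h0 | h0
  · -- v x₀ = 0
    rw [hφx, ← h0, mul_zero]
    show f 0 ≤ infLap φ x₀
    calc f 0 = δ ^ 3 * (M * f (v x₀)) := by rw [← h0, hf0]; ring
      _ ≤ infLap φ x₀ := hkey'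
  · have hle := (hf (v x₀) h0 (hvb x₀ hx₀) δ hδ hδle).2
    rw [hφx]
    calc f (δ * v x₀) ≤ M * δ ^ 3 * f (v x₀) := hle
      _ = δ ^ 3 * (M * f (v x₀)) := by ring
      _ ≤ infLap φ x₀ := hkey'
end
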